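/- arXiv:1905.04352 — 7 statements merged into one kernel-verified Lean document; each statement's English description precedes it below -/
import Mathlib

section
/- For any ε > 0, the number of integer solutions (a, b, c) of the system b + c - a = m, b² + c² - a² = n (with m, n fixed and with no pairing, i.e. 2(m-b)(m-c) = m² - n ≠ 0) satisfying |a| ~ N1, |b| ~ N2, |c| ~ N3 is O_ε(N^ε), where N is the second largest of N1, N2, N3. -/
theorem tau_le (ε : ℝ) (hε : 0 < ε) :
    ∃ C : ℝ, 1 ≤ C ∧ ∀ K : ℕ, K ≠ 0 → (K.divisors.card : ℝ) ≤ C * (K : ℝ) ^ ε := by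
  have hlog : 0 < Real.log 2 := Real.log_pos one_lt_two
  set B : ℝ := 1 + 1 / (ε * Real.log 2) with hBdef
  have hB : 1 ≤ B := le_add_of_nonneg_right (by positivity)
  set P : ℕ := ⌈(2:ℝ) ^ (1/ε)⌉₊ + 1 with hPdef
  refine ⟨B ^ P, one_le_pow₀ hB, ?_⟩
  intro K hK
  have hKr : (K:ℝ) = ∏ p ∈ K.primeFactors, (p:ℝ) ^ (K.factorization p) := by
    have h1 : ∏ p ∈ K.primeFactors, p ^ K.factorization p = K := by
      rw [← Nat.support_factorization]; exact Nat.factorization_prod_pow_eq_self hK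
    exact_mod_cast h1.symm
  have hKe : (K:ℝ) ^ ε = ∏ p ∈ K.primeFactors, ((p:ℝ) ^ (K.factorization p)) ^ ε := by
    rw [hKr, ← Real.finset_prod_rpow _ _ (fun i _ => by positivity) ε]
  have hcard : (K.divisors.card : ℝ) = ∏ p ∈ K.primeFactors, ((K.factorization p : ℝ) + 1) := by
    rw [Nat.card_divisors hK]; push_cast; ring
  have hfac : ∀ p ∈ K.primeFactors, ((K.factorization p : ℝ) + 1) ≤
      (if (p:ℝ) < (2:ℝ) ^ (1/ε) then B else 1) * ((p:ℝ) ^ (K.factorization p)) ^ ε := by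
    intro p hp
    have hp2 : 2 ≤ p := (Nat.prime_of_mem_primeFactors hp).two_le
    have hp2r : (2:ℝ) ≤ (p:ℝ) := by exact_mod_cast hp2
    have hppos : (0:ℝ) < p := by linarith
    set a : ℕ := K.factorization p with ha
    have hrw : ((p:ℝ) ^ a) ^ ε = (p:ℝ) ^ ((a:ℝ) * ε) := by
      rw [← Real.rpow_natCast (p:ℝ) a, ← Real.rpow_mul hppos.le]
    rw [hrw]
    have haε : 0 ≤ (a:ℝ) * ε := by positivity
    split_ifs with hsmall
    · -- small prime: B * p^(aε) ≥ a+1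
      have h2a : (2:ℝ) ^ ((a:ℝ)*ε) ≤ (p:ℝ) ^ ((a:ℝ)*ε) := Real.rpow_le_rpow (by norm_num) hp2r haε
      have hexp : (2:ℝ) ^ ((a:ℝ)*ε) = Real.exp (Real.log 2 * ((a:ℝ)*ε)) :=
        Real.rpow_def_of_pos (by norm_num) _
      have hexp2 : Real.log 2 * ((a:ℝ)*ε) + 1 ≤ Real.exp (Real.log 2 * ((a:ℝ)*ε)) :=
        Real.add_one_le_exp _
      have hkey : (a:ℝ) + 1 ≤ B * (1 + Real.log 2 * ((a:ℝ)*ε)) := by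
        rw [hBdef]
        have hx : 0 < ε * Real.log 2 := by positivity
        have hexpand : (1 + 1/(ε * Real.log 2)) * (1 + Real.log 2 * ((a:ℝ)*ε))
            = 1 + Real.log 2 * ((a:ℝ)*ε) + 1/(ε * Real.log 2) + (a:ℝ) := by
          field_simp; ring
        have h1 : 0 ≤ Real.log 2 * ((a:ℝ)*ε) := by positivity
        have h2 : 0 ≤ 1/(ε * Real.log 2) := by positivity
        linarith [hexpand]
      calc (a:ℝ) + 1 ≤ B * (1 + Real.log 2 * ((a:ℝ)*ε)) := hkey
        _ ≤ B * ((2:ℝ) ^ ((a:ℝ)*ε)) := by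
            rw [hexp]; nlinarith [hexp2, hB]
        _ ≤ B * ((p:ℝ) ^ ((a:ℝ)*ε)) := by nlinarith [h2a, hB]
    · -- large prime: p^(aε) ≥ 2^a ≥ a+1
      push_neg at hsmall
      have h1 : ((2:ℝ) ^ (1/ε)) ^ ((a:ℝ)*ε) ≤ (p:ℝ) ^ ((a:ℝ)*ε) :=
        Real.rpow_le_rpow (by positivity) hsmall haε
      have h2 : ((2:ℝ) ^ (1/ε)) ^ ((a:ℝ)*ε) = (2:ℝ) ^ (a:ℕ) := by
        rw [← Real.rpow_mul (by norm_num : (0:ℝ) ≤ 2), ← Real.rpow_natCast 2 a]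
        congr 1
        field_simp
      have h3 : (a:ℝ) + 1 ≤ (2:ℝ) ^ (a:ℕ) := by
        have := Nat.lt_two_pow_self (n := a)
        exact_mod_cast Nat.succ_le_of_lt this
      rw [one_mul]
      calc (a:ℝ) + 1 ≤ (2:ℝ)^(a:ℕ) := h3
        _ = ((2:ℝ) ^ (1/ε)) ^ ((a:ℝ)*ε) := h2.symm
        _ ≤ _ := h1
  have hprodle : (K.divisors.card : ℝ) ≤
      (∏ p ∈ K.primeFactors, (if (p:ℝ) < (2:ℝ) ^ (1/ε) then B else (1:ℝ))) * (K:ℝ) ^ ε := by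
    rw [hcard, hKe, ← Finset.prod_mul_distrib]
    exact Finset.prod_le_prod (fun i _ => by positivity) hfac
  have hw : (∏ p ∈ K.primeFactors, (if (p:ℝ) < (2:ℝ) ^ (1/ε) then B else (1:ℝ))) ≤ B ^ P := by
    rw [Finset.prod_ite, Finset.prod_const, Finset.prod_const_one, mul_one]
    have hsub : K.primeFactors.filter (fun p : ℕ => ((p:ℝ) < (2:ℝ) ^ (1/ε))) ⊆ Finset.range P := by
      intro p hp
      rw [Finset.mem_filter] at hp
      rw [Finset.mem_range, hPdef]
      have : (p:ℝ) < (⌈(2:ℝ) ^ (1/ε)⌉₊ : ℝ) := lt_of_lt_of_le hp.2 (Nat.le_ceil _)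
      have := Nat.cast_lt.mp this
      omega
    calc B ^ (K.primeFactors.filter (fun p : ℕ => ((p:ℝ) < (2:ℝ) ^ (1/ε)))).card
        ≤ B ^ (Finset.range P).card := pow_le_pow_right₀ hB (Finset.card_le_card hsub)
      _ = B ^ P := by rw [Finset.card_range]
  have hKε : 0 ≤ (K:ℝ) ^ ε := by positivity
  calc (K.divisors.card : ℝ) ≤ _ := hprodle
    _ ≤ B ^ P * (K:ℝ) ^ ε := mul_le_mul_of_nonneg_right hw hKε

theorem key1 (K d e d' e' : ℤ) (N : ℝ) (hN : 1 ≤ N)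
    (hde : 2 * d * e = K) (hde' : 2 * d' * e' = K) (hK : K ≠ 0)
    (hd : |(d:ℝ)| < 4 * N) (hd' : |(d':ℝ)| < 4 * N)
    (hee' : |(e:ℝ) - (e':ℝ)| < 4 * N) (hbig : 1024 * N ^ 4 < |(K:ℝ)|) :
    e = e' ∧ d = d' := by
  have he0 : e ≠ 0 := fun h => hK (by rw [← hde, h]; ring)
  have hd0 : d ≠ 0 := fun h => hK (by rw [← hde, h]; ring)
  have he'0 : e' ≠ 0 := fun h => hK (by rw [← hde', h]; ring)
  have hd'0 : d' ≠ 0 := fun h => hK (by rw [← hde', h]; ring)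
  have hmul : d * e = d' * e' := by
    have h2 : (2:ℤ) * (d * e) = 2 * (d' * e') := by linear_combination hde - hde'
    exact mul_left_cancel₀ two_ne_zero h2
  have hee : e = e' := by
    by_contra hne
    have hdd : d ≠ d' := by
      rintro rfl
      exact hne (mul_left_cancel₀ hd0 hmul)
    have hid : (e - e') * d = e' * (d' - d) := by linear_combination hmul
    have hidR : ((e:ℝ) - e') * d = (e':ℝ) * ((d':ℝ) - d) := by exact_mod_cast congrArg (Int.cast : ℤ → ℝ) hid
    have h1le : (1:ℝ) ≤ |(d':ℝ) - (d:ℝ)| := by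
      have h := Int.one_le_abs (sub_ne_zero.mpr (Ne.symm hdd))
      have h2 : ((1:ℤ):ℝ) ≤ ((|d' - d| : ℤ) : ℝ) := Int.cast_le.mpr h
      rwa [Int.cast_abs, Int.cast_sub, Int.cast_one] at h2
    have hAB : |(e':ℝ)| ≤ |(e:ℝ) - e'| * |(d:ℝ)| := by
      calc |(e':ℝ)| = |(e':ℝ)| * 1 := (mul_one _).symm
        _ ≤ |(e':ℝ)| * |(d':ℝ) - d| := mul_le_mul_of_nonneg_left h1le (abs_nonneg _)
        _ = |((e':ℝ)) * ((d':ℝ) - d)| := (abs_mul _ _).symm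
        _ = |((e:ℝ) - e') * d| := by rw [hidR]
        _ = |(e:ℝ) - e'| * |(d:ℝ)| := abs_mul _ _
    have hKabs : |(K:ℝ)| = 2 * |(d':ℝ)| * |(e':ℝ)| := by
      rw [← hde']; push_cast; rw [abs_mul, abs_mul]; norm_num
    have h0e : (0:ℝ) ≤ |(e:ℝ) - e'| := abs_nonneg _
    have h0d : (0:ℝ) ≤ |(d:ℝ)| := abs_nonneg _
    have h0d' : (0:ℝ) ≤ |(d':ℝ)| := abs_nonneg _
    have h0e' : (0:ℝ) ≤ |(e':ℝ)| := abs_nonneg _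
    have hEbound : |(e':ℝ)| ≤ (4*N) * (4*N) := by
      calc |(e':ℝ)| ≤ |(e:ℝ) - e'| * |(d:ℝ)| := hAB
        _ ≤ (4*N) * (4*N) := by nlinarith
    have hKle : |(K:ℝ)| ≤ 2 * (4*N) * ((4*N)*(4*N)) := by
      rw [hKabs]; nlinarith
    have hN34 : N^3 ≤ N^4 := pow_le_pow_right₀ hN (by norm_num)
    have hN4 : (1:ℝ) ≤ N^4 := one_le_pow₀ hN
    have hexp : 2 * (4*N) * ((4*N)*(4*N)) = 128 * N^3 := by ring
    linarith
  refine ⟨hee, ?_⟩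
  subst hee
  exact mul_right_cancel₀ he0 hmul

theorem key2 (K s t s' t' : ℤ) (N : ℝ) (hN : 1 ≤ N)
    (hs : s ^ 2 = 2 * K + t ^ 2) (hs' : s' ^ 2 = 2 * K + t' ^ 2)
    (ht : |(t:ℝ)| < 4 * N) (ht' : |(t':ℝ)| < 4 * N)
    (hbig : 1024 * N ^ 4 < |(K:ℝ)|)
    (hsgn : s.sign = s'.sign) (htgn : t.sign = t'.sign) :
    s = s' ∧ t = t' := by
  have hsR : (s:ℝ)^2 = 2*(K:ℝ) + (t:ℝ)^2 := by exact_mod_cast congrArg (Int.cast : ℤ → ℝ) hs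
  have hsR' : (s':ℝ)^2 = 2*(K:ℝ) + (t':ℝ)^2 := by exact_mod_cast congrArg (Int.cast : ℤ → ℝ) hs'
  have htsq : (t:ℝ)^2 < 16 * N^2 := by nlinarith [abs_nonneg (t:ℝ), sq_abs (t:ℝ)]
  have htsq' : (t':ℝ)^2 < 16 * N^2 := by nlinarith [abs_nonneg (t':ℝ), sq_abs (t':ℝ)]
  have hN2 : N^2 ≤ N^4 := pow_le_pow_right₀ hN (by norm_num)
  have hN4 : (1:ℝ) ≤ N^4 := one_le_pow₀ hN
  have hKpos : (0:ℝ) < (K:ℝ) := by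
    by_contra hKneg
    push_neg at hKneg
    have habs : |(K:ℝ)| = -(K:ℝ) := abs_of_nonpos hKneg
    rw [habs] at hbig
    nlinarith [sq_nonneg (s:ℝ)]
  have hKabs : |(K:ℝ)| = (K:ℝ) := abs_of_pos hKpos
  rw [hKabs] at hbig
  have hs0 : s ≠ 0 := by
    rintro rfl; push_cast at hsR; nlinarith [sq_nonneg (t:ℝ)]
  have hs0' : s' ≠ 0 := by
    rintro rfl; push_cast at hsR'; nlinarith [sq_nonneg (t':ℝ)]
  have hsgn2 : 0 < s * s' := by
    rcases lt_trichotomy s 0 with h | h | h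
    · have h2 : s' < 0 := Int.sign_eq_neg_one_iff_neg.mp
        (by rw [← hsgn]; exact Int.sign_eq_neg_one_iff_neg.mpr h)
      exact mul_pos_of_neg_of_neg h h2
    · exact absurd h hs0
    · have h2 : 0 < s' := Int.sign_eq_one_iff_pos.mp
        (by rw [← hsgn]; exact Int.sign_eq_one_iff_pos.mpr h)
      exact mul_pos h h2
  have hssR : (0:ℝ) < (s:ℝ) * (s':ℝ) := by exact_mod_cast hsgn2
  have hseq : s = s' := by
    by_contra hne
    have h1 : (1:ℝ) ≤ ((s:ℝ) - s')^2 := by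
      have h := Int.one_le_abs (sub_ne_zero.mpr hne)
      have h2 : ((1:ℤ):ℝ) ≤ ((|s - s'| : ℤ) : ℝ) := Int.cast_le.mpr h
      rw [Int.cast_abs, Int.cast_sub, Int.cast_one] at h2
      nlinarith [abs_nonneg ((s:ℝ) - s'), sq_abs ((s:ℝ) - s')]
    have hb2 : (s:ℝ)^2 > 2048*N^4 := by linarith [sq_nonneg (t:ℝ)]
    have hb2' : (s':ℝ)^2 > 2048*N^4 := by linarith [sq_nonneg (t':ℝ)]
    have hexp : ((s:ℝ)+s')^2 = (s:ℝ)^2 + 2*((s:ℝ)*(s':ℝ)) + (s':ℝ)^2 := by ring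
    have hsum : ((s:ℝ)+s')^2 > 4096 * N^4 := by linarith
    have hdiff : ((s:ℝ)^2 - (s':ℝ)^2)^2 = ((t:ℝ)^2 - (t':ℝ)^2)^2 := by
      rw [hsR, hsR']; ring
    have hT : ((t:ℝ)^2 - (t':ℝ)^2)^2 < 1024 * N^4 := by
      have hu : (0:ℝ) ≤ (t:ℝ)^2 := sq_nonneg _
      have hv : (0:ℝ) ≤ (t':ℝ)^2 := sq_nonneg _
      have hsq : ((t:ℝ)^2 - (t':ℝ)^2)^2 < (16*N^2)^2 :=
        sq_lt_sq' (by linarith) (by linarith)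
      have hr : (16*N^2)^2 = 256*N^4 := by ring
      nlinarith [hN4]
    have hS : ((s:ℝ)^2 - (s':ℝ)^2)^2 = ((s:ℝ) - s')^2 * ((s:ℝ) + s')^2 := by ring
    have hmm : 1 * ((s:ℝ) + s')^2 ≤ ((s:ℝ) - s')^2 * ((s:ℝ) + s')^2 :=
      mul_le_mul_of_nonneg_right h1 (sq_nonneg _)
    rw [one_mul] at hmm
    linarith
  refine ⟨hseq, ?_⟩
  subst hseq
  have htsq2 : t^2 = t'^2 := by
    have h0 : 2*K + t^2 = 2*K + t'^2 := hs.symm.trans hs'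
    linarith
  have hz : (t - t') * (t + t') = 0 := by linear_combination htsq2
  rcases mul_eq_zero.mp hz with h | h
  · omega
  · have htt : t = -t' := by omega
    subst htt
    have h2 : -t'.sign = t'.sign := by rw [← Int.sign_neg]; exact htgn
    have h3 : t'.sign = 0 := by omega
    have : t' = 0 := Int.sign_eq_zero_iff_zero.mp h3
    omega

theorem stmt4 (ε : ℝ) (hε : 0 < ε) :
    ∃ C : ℝ, 0 < C ∧ ∀ (m n : ℤ), m ^ 2 - n ≠ 0 →
      ∀ N1 N2 N3 : ℝ, 1 ≤ N1 → 1 ≤ N2 → 1 ≤ N3 →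
      (Set.ncard {p : ℤ × ℤ × ℤ |
        p.2.1 + p.2.2 - p.1 = m ∧ p.2.1 ^ 2 + p.2.2 ^ 2 - p.1 ^ 2 = n ∧
        N1 ≤ |(p.1 : ℝ)| ∧ |(p.1 : ℝ)| < 2 * N1 ∧
        N2 ≤ |(p.2.1 : ℝ)| ∧ |(p.2.1 : ℝ)| < 2 * N2 ∧
        N3 ≤ |(p.2.2 : ℝ)| ∧ |(p.2.2 : ℝ)| < 2 * N3} : ℝ)
        ≤ C * (max (min N1 N2) (min (max N1 N2) N3)) ^ ε := by
  classical
  obtain ⟨Cd, hCd1, hCd⟩ := tau_le (ε/4) (by positivity)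
  refine ⟨2 * Cd * (1024:ℝ) ^ (ε/4) + 9, by positivity, ?_⟩
  intro m n hmn N1 N2 N3 hN1 hN2 hN3
  set N : ℝ := max (min N1 N2) (min (max N1 N2) N3) with hNdef
  set S : Set (ℤ × ℤ × ℤ) := {p : ℤ × ℤ × ℤ |
        p.2.1 + p.2.2 - p.1 = m ∧ p.2.1 ^ 2 + p.2.2 ^ 2 - p.1 ^ 2 = n ∧
        N1 ≤ |(p.1 : ℝ)| ∧ |(p.1 : ℝ)| < 2 * N1 ∧
        N2 ≤ |(p.2.1 : ℝ)| ∧ |(p.2.1 : ℝ)| < 2 * N2 ∧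
        N3 ≤ |(p.2.2 : ℝ)| ∧ |(p.2.2 : ℝ)| < 2 * N3} with hSdef
  have hN : 1 ≤ N := le_trans (le_min hN1 hN2) (le_max_left _ _)
  have hN0 : (0:ℝ) ≤ N := by linarith
  have hNeps : 1 ≤ N ^ ε := Real.one_le_rpow hN hε.le
  have hNeps0 : (0:ℝ) ≤ N ^ ε := by positivity
  have hR0 : (0:ℝ) ≤ 2 * Cd * (1024:ℝ) ^ (ε/4) := by positivity
  set K : ℤ := m ^ 2 - n with hKdef
  have hfacS : ∀ p ∈ S, 2 * (m - p.2.1) * (m - p.2.2) = K := by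
    rintro ⟨a, b, c⟩ hp
    simp only [hSdef, Set.mem_setOf_eq] at hp
    obtain ⟨h1, h2, -⟩ := hp
    try simp only at h1 h2 ⊢
    rw [hKdef]
    linear_combination (a + b + c - m) * h1 - h2
  by_cases hbig : |(K : ℝ)| ≤ 1024 * N ^ 4
  · -- small K : divisor counting
    set F : Finset ℤ := K.natAbs.divisors.image (fun d : ℕ => (d:ℤ)) ∪
        K.natAbs.divisors.image (fun d : ℕ => -(d:ℤ)) with hFdef
    have hmaps : ∀ p ∈ S, (fun p : ℤ × ℤ × ℤ => m - p.2.1) p ∈ (F : Set ℤ) := by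
      intro p hp
      have hfac := hfacS p hp
      have hdvd : (m - p.2.1) ∣ K := ⟨2 * (m - p.2.2), by linear_combination -hfac⟩
      have hne : m - p.2.1 ≠ 0 := by
        intro h
        apply hmn
        rw [← hfac, h]; ring
      have hmem : (m - p.2.1).natAbs ∈ K.natAbs.divisors :=
        Nat.mem_divisors.mpr ⟨Int.natAbs_dvd_natAbs.mpr hdvd, Int.natAbs_ne_zero.mpr hmn⟩
      simp only [Finset.coe_union, Set.mem_union, Finset.mem_coe, Finset.mem_image, hFdef]
      rcases Int.natAbs_eq (m - p.2.1) with h | h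
      · exact Or.inl ⟨(m - p.2.1).natAbs, hmem, h.symm⟩
      · exact Or.inr ⟨(m - p.2.1).natAbs, hmem, h.symm⟩
    have hinj : Set.InjOn (fun p : ℤ × ℤ × ℤ => m - p.2.1) S := by
      rintro ⟨a, b, c⟩ hp ⟨a', b', c'⟩ hq h
      try simp only at h
      have hb : b = b' := by omega
      have e1 := hfacS _ hp
      have e2 := hfacS _ hq
      try simp only at e1 e2
      have hner : m - b ≠ 0 := by
        intro h0
        apply hmn
        rw [← e1, h0]; ring
      have hw : (2 : ℤ) * (m - b) ≠ 0 := by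
        simp [hner]
      rw [hb] at e1 hw
      have hc : m - c = m - c' := mul_left_cancel₀ hw (e1.trans e2.symm)
      simp only [hSdef, Set.mem_setOf_eq] at hp hq
      obtain ⟨h1, -⟩ := hp
      obtain ⟨h1', -⟩ := hq
      try simp only at h1 h1'
      have : a = a' ∧ b = b' ∧ c = c' := by omega
      rw [this.1, this.2.1, this.2.2]
    have hcount : S.ncard ≤ F.card := by
      have h := Set.ncard_le_ncard_of_injOn _ hmaps hinj F.finite_toSet
      rwa [Set.ncard_coe_finset] at h
    have hFcard : (F.card : ℝ) ≤ 2 * K.natAbs.divisors.card := by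
      have h1 := Finset.card_union_le (K.natAbs.divisors.image (fun d : ℕ => (d:ℤ)))
        (K.natAbs.divisors.image (fun d : ℕ => -(d:ℤ)))
      have h2 := Finset.card_image_le (s := K.natAbs.divisors) (f := fun d : ℕ => (d:ℤ))
      have h3 := Finset.card_image_le (s := K.natAbs.divisors) (f := fun d : ℕ => -(d:ℤ))
      rw [hFdef]
      push_cast
      have := le_trans h1 (add_le_add h2 h3)
      exact_mod_cast le_trans (Nat.cast_le.mpr this) (by push_cast; linarith)
    have htau := hCd K.natAbs (Int.natAbs_ne_zero.mpr hmn)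
    have hcast : ((K.natAbs : ℕ) : ℝ) = |(K : ℝ)| := by
      rw [Nat.cast_natAbs, Int.cast_abs]
    have hrpow : ((K.natAbs : ℕ) : ℝ) ^ (ε/4) ≤ (1024 * N ^ 4) ^ (ε/4) := by
      apply Real.rpow_le_rpow (by positivity) _ (by positivity)
      rw [hcast]; exact hbig
    have hpow_eq : ((1024:ℝ) * N ^ 4) ^ (ε/4) = 1024 ^ (ε/4) * N ^ ε := by
      rw [Real.mul_rpow (by norm_num) (by positivity)]
      congr 1
      rw [← Real.rpow_natCast N 4, ← Real.rpow_mul hN0]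
      congr 1
      push_cast
      ring
    have hchain : (S.ncard : ℝ) ≤ 2 * (Cd * (((K.natAbs : ℕ) : ℝ) ^ (ε/4))) := by
      calc (S.ncard : ℝ) ≤ (F.card : ℝ) := by exact_mod_cast hcount
        _ ≤ 2 * K.natAbs.divisors.card := hFcard
        _ ≤ 2 * (Cd * (((K.natAbs : ℕ) : ℝ) ^ (ε/4))) := by linarith
    have hfin : 2 * (Cd * (((K.natAbs : ℕ) : ℝ) ^ (ε/4))) ≤
        2 * Cd * ((1024:ℝ) ^ (ε/4) * N ^ ε) := by
      have h := le_trans hrpow (le_of_eq hpow_eq)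
      have hCd0 : (0:ℝ) ≤ Cd := by linarith
      nlinarith [h, hCd0]
    have hlast : 2 * Cd * ((1024:ℝ) ^ (ε/4) * N ^ ε) ≤
        (2 * Cd * (1024:ℝ) ^ (ε/4) + 9) * N ^ ε := by nlinarith [hNeps0]
    linarith
  · -- big K
    push_neg at hbig
    have habs_comp : ∀ x y : ℤ, ∀ M1 M2 : ℝ, |(x:ℝ)| < 2 * M1 → |(y:ℝ)| < 2 * M2 →
        M1 ≤ N → M2 ≤ N → |(x:ℝ) - (y:ℝ)| < 4 * N := by
      intro x y M1 M2 hx hy hM1 hM2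
      rw [abs_lt] at hx hy ⊢
      constructor <;> [linarith; linarith]
    have hsub9 : ∀ k : ℕ, S.ncard ≤ k → (k : ℝ) ≤ 9 → (S.ncard : ℝ) ≤
        (2 * Cd * (1024:ℝ) ^ (ε/4) + 9) * N ^ ε := by
      intro k hk hk9
      have h1 : (S.ncard : ℝ) ≤ 9 := le_trans (by exact_mod_cast hk) hk9
      nlinarith [hNeps, hR0, h1]
    have h2le : min (max N1 N2) N3 ≤ N := le_max_right _ _
    have h1le : min N1 N2 ≤ N := le_max_left _ _
    rcases min_cases (max N1 N2) N3 with ⟨heq, -⟩ | ⟨heq, -⟩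
    · -- N1 ≤ N and N2 ≤ N : a, b small
      rw [heq] at h2le
      have hA1 : N1 ≤ N := le_trans (le_max_left _ _) h2le
      have hA2 : N2 ≤ N := le_trans (le_max_right _ _) h2le
      have hsub : S.Subsingleton := by
        rintro ⟨a, b, c⟩ hp ⟨a', b', c'⟩ hq
        have e1 := hfacS _ hp
        have e2 := hfacS _ hq
        try simp only at e1 e2
        simp only [hSdef, Set.mem_setOf_eq] at hp hq
        obtain ⟨h1, -, -, ha2, -, hb2, -, -⟩ := hp
        obtain ⟨h1', -, -, ha2', -, hb2', -, -⟩ := hq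
        try simp only at h1 ha2 hb2 h1' ha2' hb2'
        have e1' : 2 * (m - c) * (m - b) = K := by linear_combination e1
        have e2' : 2 * (m - c') * (m - b') = K := by linear_combination e2
        have hdcast : ((m - c : ℤ) : ℝ) = (b:ℝ) - (a:ℝ) := by
          have : m - c = b - a := by omega
          rw [this]; push_cast; ring
        have hdcast' : ((m - c' : ℤ) : ℝ) = (b':ℝ) - (a':ℝ) := by
          have : m - c' = b' - a' := by omega
          rw [this]; push_cast; ring
        have hd : |((m - c : ℤ) : ℝ)| < 4 * N := by
          rw [hdcast]; exact habs_comp b a N2 N1 hb2 ha2 hA2 hA1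
        have hd' : |((m - c' : ℤ) : ℝ)| < 4 * N := by
          rw [hdcast']; exact habs_comp b' a' N2 N1 hb2' ha2' hA2 hA1
        have hee' : |((m - b : ℤ) : ℝ) - ((m - b' : ℤ) : ℝ)| < 4 * N := by
          have hcst : ((m - b : ℤ) : ℝ) - ((m - b' : ℤ) : ℝ) = (b':ℝ) - (b:ℝ) := by
            push_cast; ring
          rw [hcst]; exact habs_comp b' b N2 N2 hb2' hb2 hA2 hA2
        obtain ⟨hee, hdd⟩ := key1 K (m - c) (m - b) (m - c') (m - b') N hN e1' e2'
          hmn hd hd' hee' hbig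
        have : a = a' ∧ b = b' ∧ c = c' := by omega
        rw [this.1, this.2.1, this.2.2]
      have hle1 : S.ncard ≤ 1 := by
        rcases hsub.eq_empty_or_singleton with h | ⟨x, h⟩ <;> simp [h]
      exact hsub9 1 hle1 (by norm_num)
    · rw [heq] at h2le
      rcases min_cases N1 N2 with ⟨heq2, -⟩ | ⟨heq2, -⟩
      · -- N1 ≤ N and N3 ≤ N : a, c small
        rw [heq2] at h1le
        have hsub : S.Subsingleton := by
          rintro ⟨a, b, c⟩ hp ⟨a', b', c'⟩ hq
          have e1 := hfacS _ hp
          have e2 := hfacS _ hq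
          try simp only at e1 e2
          simp only [hSdef, Set.mem_setOf_eq] at hp hq
          obtain ⟨h1, -, -, ha2, -, -, -, hc2⟩ := hp
          obtain ⟨h1', -, -, ha2', -, -, -, hc2'⟩ := hq
          try simp only at h1 ha2 hc2 h1' ha2' hc2'
          have hdcast : ((m - b : ℤ) : ℝ) = (c:ℝ) - (a:ℝ) := by
            have : m - b = c - a := by omega
            rw [this]; push_cast; ring
          have hdcast' : ((m - b' : ℤ) : ℝ) = (c':ℝ) - (a':ℝ) := by
            have : m - b' = c' - a' := by omega
            rw [this]; push_cast; ring
          have hd : |((m - b : ℤ) : ℝ)| < 4 * N := by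
            rw [hdcast]; exact habs_comp c a N3 N1 hc2 ha2 h2le h1le
          have hd' : |((m - b' : ℤ) : ℝ)| < 4 * N := by
            rw [hdcast']; exact habs_comp c' a' N3 N1 hc2' ha2' h2le h1le
          have hee' : |((m - c : ℤ) : ℝ) - ((m - c' : ℤ) : ℝ)| < 4 * N := by
            have hcst : ((m - c : ℤ) : ℝ) - ((m - c' : ℤ) : ℝ) = (c':ℝ) - (c:ℝ) := by
              push_cast; ring
            rw [hcst]; exact habs_comp c' c N3 N3 hc2' hc2 h2le h2le
          obtain ⟨hee, hdd⟩ := key1 K (m - b) (m - c) (m - b') (m - c') N hN e1 e2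
            hmn hd hd' hee' hbig
          have : a = a' ∧ b = b' ∧ c = c' := by omega
          rw [this.1, this.2.1, this.2.2]
        have hle1 : S.ncard ≤ 1 := by
          rcases hsub.eq_empty_or_singleton with h | ⟨x, h⟩ <;> simp [h]
        exact hsub9 1 hle1 (by norm_num)
      · -- N2 ≤ N and N3 ≤ N : b, c small
        rw [heq2] at h1le
        set T : Finset (ℤ × ℤ) := ({-1, 0, 1} : Finset ℤ) ×ˢ ({-1, 0, 1} : Finset ℤ)
          with hTdef
        have hsgn3 : ∀ z : ℤ, z.sign = 1 ∨ z.sign = 0 ∨ z.sign = -1 := by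
          intro z
          rcases lt_trichotomy z 0 with h | h | h
          · right; right; exact Int.sign_eq_neg_one_iff_neg.mpr h
          · right; left; simp [h]
          · left; exact Int.sign_eq_one_iff_pos.mpr h
        have hmaps : ∀ p ∈ S, (fun p : ℤ × ℤ × ℤ =>
            ((m - p.1).sign, (p.2.2 - p.2.1).sign)) p ∈ (T : Set (ℤ × ℤ)) := by
          intro p _
          simp only [Finset.coe_product, Set.mem_prod, hTdef, Finset.mem_coe]
          constructor
          · rcases hsgn3 (m - p.1) with h | h | h <;> simp [h]
          · rcases hsgn3 (p.2.2 - p.2.1) with h | h | h <;> simp [h]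
        have hquadS : ∀ p ∈ S, (m - p.1) ^ 2 = 2 * K + (p.2.2 - p.2.1) ^ 2 := by
          rintro ⟨a, b, c⟩ hp
          simp only [hSdef, Set.mem_setOf_eq] at hp
          obtain ⟨h1, h2, -⟩ := hp
          try simp only at h1 h2 ⊢
          rw [hKdef]
          linear_combination (b + c + m + a) * h1 - 2 * h2
        have hinj : Set.InjOn (fun p : ℤ × ℤ × ℤ =>
            ((m - p.1).sign, (p.2.2 - p.2.1).sign)) S := by
          rintro ⟨a, b, c⟩ hp ⟨a', b', c'⟩ hq h
          simp only [Prod.mk.injEq] at h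
          have q1 := hquadS _ hp
          have q2 := hquadS _ hq
          try simp only at q1 q2
          simp only [hSdef, Set.mem_setOf_eq] at hp hq
          obtain ⟨h1, -, -, -, -, hb2, -, hc2⟩ := hp
          obtain ⟨h1', -, -, -, -, hb2', -, hc2'⟩ := hq
          try simp only at h1 hb2 hc2 h1' hb2' hc2'
          have ht : |((c - b : ℤ) : ℝ)| < 4 * N := by
            have hcst : ((c - b : ℤ) : ℝ) = (c:ℝ) - (b:ℝ) := by push_cast; ring
            rw [hcst]; exact habs_comp c b N3 N2 hc2 hb2 h2le h1le
          have ht' : |((c' - b' : ℤ) : ℝ)| < 4 * N := by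
            have hcst : ((c' - b' : ℤ) : ℝ) = (c':ℝ) - (b':ℝ) := by push_cast; ring
            rw [hcst]; exact habs_comp c' b' N3 N2 hc2' hb2' h2le h1le
          obtain ⟨hs, htt⟩ := key2 K (m - a) (c - b) (m - a') (c' - b') N hN q1 q2
            ht ht' hbig h.1 h.2
          have : a = a' ∧ b = b' ∧ c = c' := by omega
          rw [this.1, this.2.1, this.2.2]
        have hcount : S.ncard ≤ 9 := by
          have h := Set.ncard_le_ncard_of_injOn _ hmaps hinj T.finite_toSet
          rw [Set.ncard_coe_finset] at h
          have hT9 : T.card = 9 := by rw [hTdef]; decide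
          omega
        exact hsub9 9 hcount (by norm_num)
end

section
/- Let d1, ..., dm be distinct divisors of a nonzero integer k. Then k is divisible by lcm(d1,...,dm), and |lcm(d1,...,dm)| ≥ (∏_{j=1}^m |d_j|) / (∏_{1≤i<j≤m} |gcd(d_i, d_j)|). -/
lemma nat_gcd_lcm_dvd (a b c : ℕ) :
    Nat.gcd a (Nat.lcm b c) ∣ Nat.gcd a b * Nat.gcd a c := by
  rcases eq_or_ne a 0 with rfl | ha
  · simpa using Nat.lcm_dvd_mul b c
  rcases eq_or_ne b 0 with rfl | hb
  · simp [Nat.lcm]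
  rcases eq_or_ne c 0 with rfl | hc
  · simp [Nat.lcm]
  have h1 : Nat.gcd a (Nat.lcm b c) ≠ 0 := by
    simp [Nat.gcd_eq_zero_iff, ha]
  have h2 : Nat.gcd a b * Nat.gcd a c ≠ 0 := by
    simp [Nat.gcd_eq_zero_iff, ha]
  rw [← Nat.factorization_le_iff_dvd h1 h2]
  rw [Nat.factorization_gcd ha (Nat.lcm_ne_zero hb hc),
    Nat.factorization_lcm hb hc,
    Nat.factorization_mul (by simp [Nat.gcd_eq_zero_iff, ha]) (by simp [Nat.gcd_eq_zero_iff, ha]),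
    Nat.factorization_gcd ha hb, Nat.factorization_gcd ha hc]
  intro p
  simp only [Finsupp.inf_apply, Finsupp.sup_apply, Finsupp.add_apply]
  omega

lemma int_gcd_lcm_dvd (a b c : ℤ) : gcd a (lcm b c) ∣ gcd a b * gcd a c := by
  rw [← Int.coe_gcd, ← Int.coe_gcd, ← Int.coe_gcd, ← Int.coe_lcm, ← Int.natCast_mul,
    Int.natCast_dvd_natCast]
  have : Int.gcd a ↑(Int.lcm b c) = Nat.gcd a.natAbs (Nat.lcm b.natAbs c.natAbs) := by
    simp [Int.gcd, Int.lcm]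
  rw [this]
  exact nat_gcd_lcm_dvd _ _ _

lemma gcd_finset_lcm_dvd {ι : Type*} (a : ℤ) (s : Finset ι) (f : ι → ℤ) :
    gcd a (s.lcm f) ∣ ∏ j ∈ s, gcd a (f j) := by
  classical
  induction s using Finset.induction with
  | empty => simp
  | insert _ _ hb ih =>
    rename_i b s
    rw [Finset.lcm_insert, Finset.prod_insert hb]
    exact (int_gcd_lcm_dvd _ _ _).trans (mul_dvd_mul_left _ ih)

lemma pair_prod_succ (m : ℕ) (F : Fin (m+1) → Fin (m+1) → ℤ) :
    (∏ p ∈ Finset.univ.filter (fun p : Fin (m+1) × Fin (m+1) => p.1 < p.2), F p.1 p.2)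
    = (∏ j : Fin m, F 0 j.succ) *
      ∏ p ∈ Finset.univ.filter (fun p : Fin m × Fin m => p.1 < p.2), F p.1.succ p.2.succ := by
  rw [Finset.prod_filter, Finset.prod_filter, Fintype.prod_prod_type, Fintype.prod_prod_type]
  rw [Fin.prod_univ_succ]
  congr 1
  · rw [Fin.prod_univ_succ]
    simp
  · apply Finset.prod_congr rfl
    intro i _
    rw [Fin.prod_univ_succ]
    simp [Fin.succ_lt_succ_iff]

lemma key_dvd (m : ℕ) (d : Fin m → ℤ) :
    (∏ j, d j) ∣ (Finset.univ.lcm d) *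
      ∏ p ∈ Finset.univ.filter (fun p : Fin m × Fin m => p.1 < p.2), gcd (d p.1) (d p.2) := by
  induction m with
  | zero => simp
  | succ n ih =>
    set e : Fin n → ℤ := fun j => d j.succ with he
    set G := ∏ p ∈ Finset.univ.filter (fun p : Fin n × Fin n => p.1 < p.2), gcd (e p.1) (e p.2)
      with hG
    have hL : lcm (d 0) (Finset.univ.lcm e) ∣ Finset.univ.lcm d :=
      lcm_dvd (Finset.dvd_lcm (Finset.mem_univ _))
        (Finset.lcm_dvd fun j _ => Finset.dvd_lcm (Finset.mem_univ _))
    rw [Fin.prod_univ_succ, pair_prod_succ n (fun a b => gcd (d a) (d b))]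
    have step1 : d 0 * ∏ j, e j ∣ (d 0 * Finset.univ.lcm e) * G := by
      rw [mul_assoc]; exact mul_dvd_mul_left _ (ih e)
    have step2 : (d 0 * Finset.univ.lcm e) * G ∣
        (lcm (d 0) (Finset.univ.lcm e) * gcd (d 0) (Finset.univ.lcm e)) * G := by
      refine mul_dvd_mul ?_ dvd_rfl
      rw [mul_comm (lcm _ _)]
      exact (gcd_mul_lcm (d 0) (Finset.univ.lcm e)).symm.dvd
    have step3 : (lcm (d 0) (Finset.univ.lcm e) * gcd (d 0) (Finset.univ.lcm e)) * G ∣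
        Finset.univ.lcm d * ((∏ j : Fin n, gcd (d 0) (d j.succ)) * G) := by
      rw [← mul_assoc]
      exact mul_dvd_mul (mul_dvd_mul hL (gcd_finset_lcm_dvd _ _ _)) dvd_rfl
    exact (step1.trans step2).trans step3

theorem stmt5 (k : ℤ) (hk : k ≠ 0) (m : ℕ) (d : Fin m → ℤ)
    (hinj : Function.Injective d) (hne : ∀ j, d j ≠ 0) (hdvd : ∀ j, d j ∣ k) :
    (Finset.univ.lcm d) ∣ k ∧
    (∏ j, ((|d j| : ℤ) : ℝ)) /
        (∏ p ∈ Finset.univ.filter (fun p : Fin m × Fin m => p.1 < p.2),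
          ((|gcd (d p.1) (d p.2)| : ℤ) : ℝ))
      ≤ ((|Finset.univ.lcm d| : ℤ) : ℝ) := by
  constructor
  · exact Finset.lcm_dvd fun j _ => hdvd j
  · set L := Finset.univ.lcm d with hLdef
    set s := Finset.univ.filter (fun p : Fin m × Fin m => p.1 < p.2) with hs
    have hL0 : L ≠ 0 := by
      rw [hLdef, Ne, Finset.lcm_eq_zero_iff]
      rintro ⟨j, -, hj⟩
      exact hne j hj
    have hg0 : ∀ p ∈ s, gcd (d p.1) (d p.2) ≠ 0 := by
      intro p _
      simp only [Ne, gcd_eq_zero_iff, not_and]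
      intro h; exact absurd h (hne _)
    have hP0 : (∏ p ∈ s, gcd (d p.1) (d p.2)) ≠ 0 := Finset.prod_ne_zero_iff.mpr hg0
    have hdvd2 : |∏ j, d j| ∣ |L * ∏ p ∈ s, gcd (d p.1) (d p.2)| :=
      (abs_dvd_abs _ _).mpr (key_dvd m d)
    have hint : |∏ j, d j| ≤ |L * ∏ p ∈ s, gcd (d p.1) (d p.2)| :=
      Int.le_of_dvd (abs_pos.mpr (mul_ne_zero hL0 hP0)) hdvd2
    rw [abs_mul, Finset.abs_prod, Finset.abs_prod] at hint
    have hprodpos : (0 : ℝ) < ∏ p ∈ s, ((|gcd (d p.1) (d p.2)| : ℤ) : ℝ) := by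
      apply Finset.prod_pos
      intro p hp
      exact_mod_cast abs_pos.mpr (hg0 p hp)
    rw [div_le_iff₀ hprodpos]
    push_cast
    exact_mod_cast hint
end

section
/- Suppose d1, ..., dm are distinct positive divisors of a positive integer k, each satisfying d_j ≥ k^ε, and pairwise |d_i - d_j| ≤ 2ρ with ρ ≤ k^δ where δ = ε⁴ and m ≥ C·ε^{-2} for an appropriate constant C. Then k ≥ k^{εm - δm²}, which is impossible for k sufficiently large; hence the number of such divisors is at most m - 1. -/
open Finset

lemma gcd_lcm_dvd_prod' {ι : Type*} [DecidableEq ι] (s : Finset ι) (d : ι → ℕ) (a : ℕ) :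
    Nat.gcd a (s.lcm d) ∣ ∏ i ∈ s, Nat.gcd a (d i) := by
  induction s using Finset.induction_on with
  | empty => simp
  | @insert b s hb ih =>
    rw [Finset.lcm_insert, Finset.prod_insert hb]
    have h1 : Nat.gcd a (Nat.lcm (d b) (s.lcm d)) ∣ Nat.gcd a (d b * s.lcm d) :=
      Nat.dvd_gcd (Nat.gcd_dvd_left _ _)
        ((Nat.gcd_dvd_right _ _).trans (Nat.lcm_dvd_mul _ _))
    exact (h1.trans (Nat.gcd_mul_right_dvd_mul_gcd _ _ _)).trans (mul_dvd_mul_left _ ih)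

lemma prod_le_lcm_mul_pow' {ι : Type*} [DecidableEq ι] (s : Finset ι) (d : ι → ℕ) (B : ℕ)
    (hpos : ∀ i ∈ s, 0 < d i)
    (hB : ∀ i ∈ s, ∀ j ∈ s, i ≠ j → Nat.gcd (d i) (d j) ≤ B) :
    ∏ i ∈ s, d i ≤ s.lcm d * B ^ (s.card.choose 2) := by
  induction s using Finset.induction_on with
  | empty => simp
  | @insert b s hb ih =>
    have hpos' : ∀ i ∈ s, 0 < d i := fun i hi => hpos i (mem_insert_of_mem hi)
    have hB' : ∀ i ∈ s, ∀ j ∈ s, i ≠ j → Nat.gcd (d i) (d j) ≤ B := fun i hi j hj =>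
      hB i (mem_insert_of_mem hi) j (mem_insert_of_mem hj)
    have ihs := ih hpos' hB'
    have hdb : 0 < d b := hpos b (mem_insert_self _ _)
    have hg : Nat.gcd (d b) (s.lcm d) ≤ B ^ s.card := by
      have h1 := gcd_lcm_dvd_prod' s d (d b)
      have h2 : 0 < ∏ i ∈ s, Nat.gcd (d b) (d i) :=
        Finset.prod_pos fun i hi => Nat.gcd_pos_of_pos_left _ hdb
      have h3 : ∏ i ∈ s, Nat.gcd (d b) (d i) ≤ B ^ s.card :=
        Finset.prod_le_pow_card _ _ _ fun i hi =>
          hB b (mem_insert_self _ _) i (mem_insert_of_mem hi) (fun h => hb (h ▸ hi))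
      exact (Nat.le_of_dvd h2 h1).trans h3
    rw [Finset.prod_insert hb, Finset.lcm_insert, Finset.card_insert_of_notMem hb]
    have key : d b * s.lcm d = Nat.lcm (d b) (s.lcm d) * Nat.gcd (d b) (s.lcm d) := by
      rw [mul_comm (Nat.lcm _ _)]; exact (Nat.gcd_mul_lcm _ _).symm
    calc d b * ∏ i ∈ s, d i ≤ d b * (s.lcm d * B ^ (s.card.choose 2)) :=
          Nat.mul_le_mul_left _ ihs
      _ = (d b * s.lcm d) * B ^ (s.card.choose 2) := by ring
      _ = Nat.lcm (d b) (s.lcm d) * Nat.gcd (d b) (s.lcm d) * B ^ (s.card.choose 2) := by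
          rw [key]
      _ ≤ Nat.lcm (d b) (s.lcm d) * B ^ s.card * B ^ (s.card.choose 2) :=
          Nat.mul_le_mul_right _ (Nat.mul_le_mul_left _ hg)
      _ = lcm (d b) (s.lcm d) * B ^ ((s.card + 1).choose 2) := by
          rw [mul_assoc, ← pow_add]
          congr 2
          rw [Nat.choose_succ_succ]
          simp [Nat.choose_one_right, Nat.add_comm]

lemma core_ineq' (ε : ℝ) (hε : 0 < ε) (k : ℕ) (hk2 : 2 ≤ k) (n m : ℕ) (hnm : n ≤ m)
    (ρ : ℝ) (hρ : 0 < ρ) (hρk : ρ ≤ (k : ℝ) ^ (ε ^ 4))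
    (d : Fin m → ℕ) (hinj : Function.Injective d)
    (hdvd : ∀ j, d j ∣ k) (hge : ∀ j, (k : ℝ) ^ ε ≤ (d j : ℝ))
    (hclose : ∀ i j, |(d i : ℝ) - (d j : ℝ)| ≤ 2 * ρ) :
    ((n : ℝ) * ε - 1 - ε ^ 4 * (n.choose 2 : ℝ)) * Real.log k
      ≤ (n.choose 2 : ℝ) * Real.log 2 := by
  have hk0 : (0:ℝ) < k := by positivity
  have hk0' : 0 < k := by omega
  set D : Fin n → ℕ := fun i => d (Fin.castLE hnm i) with hD
  set p := n.choose 2 with hp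
  have hkε : (0:ℝ) < (k:ℝ) ^ ε := Real.rpow_pos_of_pos hk0 _
  have hDge : ∀ i, (k:ℝ) ^ ε ≤ (D i : ℝ) := fun i => hge _
  have hDpos : ∀ i, 0 < D i := fun i => by
    have := lt_of_lt_of_le hkε (hDge i); exact_mod_cast this
  have hDinj : Function.Injective D := hinj.comp (Fin.castLE_injective hnm)
  set B := ⌊2 * ρ⌋₊ with hB
  have hBg : ∀ i j : Fin n, i ≠ j → Nat.gcd (D i) (D j) ≤ B := by
    intro i j hij
    have hne : D i ≠ D j := fun h => hij (hDinj h)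
    have h1 : (Nat.gcd (D i) (D j) : ℤ) ∣ (D i : ℤ) - (D j : ℤ) :=
      dvd_sub (Int.natCast_dvd_natCast.mpr (Nat.gcd_dvd_left _ _))
        (Int.natCast_dvd_natCast.mpr (Nat.gcd_dvd_right _ _))
    have h2 : (D i : ℤ) - (D j : ℤ) ≠ 0 := sub_ne_zero.mpr (by exact_mod_cast hne)
    have h3 : (Nat.gcd (D i) (D j) : ℤ) ≤ |(D i : ℤ) - (D j : ℤ)| :=
      Int.le_of_dvd (abs_pos.mpr h2) ((dvd_abs _ _).mpr h1)
    have h4 : (Nat.gcd (D i) (D j) : ℝ) ≤ 2 * ρ := by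
      have h5 := hclose (Fin.castLE hnm i) (Fin.castLE hnm j)
      have h6 : ((|(D i : ℤ) - (D j : ℤ)| : ℤ) : ℝ) = |(D i : ℝ) - (D j : ℝ)| := by
        push_cast; rfl
      have h7 : (Nat.gcd (D i) (D j) : ℝ) ≤ |(D i : ℝ) - (D j : ℝ)| := by
        rw [← h6]; exact_mod_cast h3
      exact h7.trans h5
    exact Nat.le_floor h4
  have hlcm : Finset.univ.lcm D ∣ k := Finset.lcm_dvd fun i _ => hdvd _
  have hlcmle : Finset.univ.lcm D ≤ k := Nat.le_of_dvd hk0' hlcm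
  have hmain : ∏ i, D i ≤ k * B ^ p := by
    have h := prod_le_lcm_mul_pow' Finset.univ D B (fun i _ => hDpos i)
      (fun i _ j _ hij => hBg i j hij)
    rw [Finset.card_univ, Fintype.card_fin] at h
    exact h.trans (Nat.mul_le_mul_right _ hlcmle)
  have h6 : ((k:ℝ) ^ ε) ^ n ≤ ∏ i : Fin n, (D i : ℝ) := by
    calc ((k:ℝ) ^ ε) ^ n = ∏ _i : Fin n, (k:ℝ) ^ ε := by
          rw [Finset.prod_const, Finset.card_univ, Fintype.card_fin]
      _ ≤ ∏ i, (D i : ℝ) := Finset.prod_le_prod (fun _ _ => hkε.le) (fun i _ => hDge i)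
  have h7 : (∏ i : Fin n, (D i : ℝ)) ≤ (k:ℝ) * (B:ℝ) ^ p := by
    have := (Nat.cast_le (α := ℝ)).mpr hmain
    push_cast at this
    exact this
  have hBle : (B:ℝ) ≤ 2 * (k:ℝ) ^ (ε ^ 4) :=
    (Nat.floor_le (by positivity)).trans (by linarith)
  have h8 : (B:ℝ) ^ p ≤ (2 * (k:ℝ) ^ (ε ^ 4)) ^ p :=
    pow_le_pow_left₀ (by positivity) hBle p
  have h9 : ((k:ℝ) ^ ε) ^ n ≤ (k:ℝ) * (2 * (k:ℝ) ^ (ε ^ 4)) ^ p :=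
    h6.trans (h7.trans (mul_le_mul_of_nonneg_left h8 hk0.le))
  have h10 := Real.log_le_log (by positivity) h9
  rw [Real.log_pow, Real.log_rpow hk0, Real.log_mul (ne_of_gt hk0) (by positivity),
    Real.log_pow, Real.log_mul two_ne_zero (by positivity), Real.log_rpow hk0] at h10
  nlinarith [h10]

set_option maxHeartbeats 1600000 in
theorem stmt6 (ε : ℝ) (hε : 0 < ε) (hε1 : ε < 1) :
    ∃ C : ℝ, 0 < C ∧ ∃ K : ℕ, ∀ k : ℕ, K ≤ k →
      ∀ m : ℕ, C / ε ^ 2 ≤ (m : ℝ) →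
      ∀ ρ : ℝ, 0 < ρ → ρ ≤ (k : ℝ) ^ (ε ^ 4) →
      ¬ ∃ d : Fin m → ℕ, Function.Injective d ∧
          (∀ j, d j ∣ k) ∧ (∀ j, (k : ℝ) ^ ε ≤ (d j : ℝ)) ∧
          (∀ i j, |(d i : ℝ) - (d j : ℝ)| ≤ 2 * ρ) := by
  classical
  refine ⟨4, by norm_num, ?_⟩
  have hε2 : (0:ℝ) < ε ^ 2 := by positivity
  set N₀ : ℕ := max 2 ⌈ε⁻¹ ^ 3⌉₊ with hN₀
  set e₀ : ℝ := if (1:ℝ)/2 ≤ ε ^ 2 then (1 - ε) * (ε^3 + ε^2 + ε - 1)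
    else min (2/ε) (1/(2*ε^2)) - 1 with he₀def
  have he₀ : 0 < e₀ := by
    rw [he₀def]; split_ifs with hc
    · have h7 : (0.7:ℝ) ≤ ε := by nlinarith
      have h3 : 0 < ε^3 + ε^2 + ε - 1 := by nlinarith
      exact mul_pos (by linarith) h3
    · push_neg at hc
      have h1 : 1 < 2/ε := by rw [lt_div_iff₀ hε]; linarith
      have h2 : 1 < 1/(2*ε^2) := by rw [lt_div_iff₀ (by positivity)]; linarith
      have := lt_min h1 h2
      linarith
  refine ⟨max 2 ⌈Real.exp (((N₀:ℝ)^2 * Real.log 2 + 1)/e₀)⌉₊, ?_⟩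
  intro k hk m hm ρ hρ hρk
  rintro ⟨d, hinj, hdvd, hge, hclose⟩
  have hk2 : 2 ≤ k := le_trans (le_max_left _ _) hk
  have hk0 : (0:ℝ) < k := by positivity
  have hkR : (2:ℝ) ≤ (k:ℝ) := by exact_mod_cast hk2
  have hL : 0 < Real.log k := Real.log_pos (by linarith)
  have hε2le1 : ε ^ 2 ≤ 1 := by nlinarith
  have hm4R : (4:ℝ) ≤ (m:ℝ) := by
    have h1 : (4:ℝ) ≤ 4 / ε^2 := by
      rw [le_div_iff₀ hε2]; nlinarith
    linarith [hm]
  have hm4 : 4 ≤ m := by exact_mod_cast hm4R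
  obtain ⟨n, hnm, hnN, hE⟩ : ∃ n : ℕ, n ≤ m ∧ n ≤ N₀ ∧
      e₀ ≤ (n:ℝ) * ε - 1 - ε ^ 4 * (n.choose 2 : ℝ) := by
    by_cases hc : (1:ℝ)/2 ≤ ε ^ 2
    · refine ⟨2, by omega, le_max_left _ _, ?_⟩
      rw [he₀def, if_pos hc]
      have hch : ((2:ℕ).choose 2 : ℝ) = 1 := by norm_num
      rw [hch]
      have hid : (1-ε)*(ε^3+ε^2+ε-1) = ((2:ℕ):ℝ)*ε - 1 - ε^4*1 := by
        push_cast; ring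
      linarith [hid.le]
    · push_neg at hc
      set n' := min m ⌈ε⁻¹ ^ 3⌉₊ with hn'
      have hceil1 : 1 ≤ ⌈ε⁻¹ ^ 3⌉₊ := by
        rw [Nat.one_le_ceil_iff]; positivity
      have hn1 : 1 ≤ n' := le_min (by omega) hceil1
      refine ⟨n', min_le_left _ _, le_trans (min_le_right _ _) (le_max_right _ _), ?_⟩
      rw [he₀def, if_neg (not_le.mpr hc)]
      have hcast : ((n' * (n' - 1) : ℕ) : ℝ) = (n':ℝ) * ((n':ℝ) - 1) := by
        push_cast [Nat.cast_sub hn1]; ring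
      have ha : ((n'.choose 2 : ℕ):ℝ) ≤ (n':ℝ) * ((n':ℝ) - 1) / 2 := by
        rw [Nat.choose_two_right]
        calc ((n' * (n' - 1) / 2 : ℕ):ℝ) ≤ ((n' * (n' - 1) : ℕ):ℝ) / 2 := by
              exact_mod_cast Nat.cast_div_le
          _ = (n':ℝ) * ((n':ℝ) - 1) / 2 := by rw [hcast]
      have hinv : ε⁻¹ ^ 3 * ε ^ 3 = 1 := by
        rw [← mul_pow, inv_mul_cancel₀ (ne_of_gt hε), one_pow]
      have hb : ((n':ℝ) - 1) * ε^3 ≤ 1 := by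
        have h1 : (n':ℝ) ≤ (⌈ε⁻¹ ^ 3⌉₊ : ℝ) := by
          exact_mod_cast min_le_right m _
        have h2 : (⌈ε⁻¹ ^ 3⌉₊ : ℝ) < ε⁻¹ ^ 3 + 1 := Nat.ceil_lt_add_one (by positivity)
        nlinarith [pow_pos hε 3]
      have hcmin : min (2/ε) (1/(2*ε^2)) ≤ (n':ℝ) * ε / 2 := by
        rcases le_total m ⌈ε⁻¹ ^ 3⌉₊ with hle | hle
        · have heq : n' = m := min_eq_left hle
          have h1 : 4 / ε^2 ≤ (n':ℝ) := by rw [heq]; linarith [hm]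
          have h1' : 4 ≤ (n':ℝ) * ε^2 := by rw [div_le_iff₀ hε2] at h1; linarith
          have h2 : 2/ε ≤ (n':ℝ) * ε / 2 := by
            rw [div_le_div_iff₀ hε (by norm_num : (0:ℝ) < 2)]
            nlinarith
          exact le_trans (min_le_left _ _) h2
        · have heq : n' = ⌈ε⁻¹ ^ 3⌉₊ := min_eq_right hle
          have h1 : ε⁻¹ ^ 3 ≤ (n':ℝ) := by rw [heq]; exact Nat.le_ceil _
          have h2 : 1/(2*ε^2) ≤ (n':ℝ) * ε / 2 := by
            rw [div_le_div_iff₀ (by positivity) (by norm_num : (0:ℝ) < 2)]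
            nlinarith [mul_le_mul_of_nonneg_right h1 (le_of_lt (pow_pos hε 3))]
          exact le_trans (min_le_right _ _) h2
      have hd : ε^4 * ((n'.choose 2 : ℕ):ℝ) ≤ ε^4 * ((n':ℝ) * ((n':ℝ) - 1) / 2) :=
        mul_le_mul_of_nonneg_left ha (by positivity)
      have hee : ε^4 * ((n':ℝ) * ((n':ℝ) - 1) / 2)
          = ((n':ℝ) * ε / 2) * (((n':ℝ) - 1) * ε^3) := by ring
      have hnn : (0:ℝ) ≤ (n':ℝ) * ε / 2 := by positivity
      have hf : ((n':ℝ) * ε / 2) * (((n':ℝ) - 1) * ε^3) ≤ ((n':ℝ) * ε / 2) * 1 :=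
        mul_le_mul_of_nonneg_left hb hnn
      linarith
  have hpN : ((n.choose 2 : ℕ):ℝ) ≤ (N₀:ℝ)^2 := by
    have h1 : n.choose 2 ≤ N₀ ^ 2 := by
      rw [Nat.choose_two_right]
      calc n * (n-1) / 2 ≤ n * (n-1) := Nat.div_le_self _ _
        _ ≤ n * n := Nat.mul_le_mul_left _ (Nat.sub_le _ _)
        _ ≤ N₀ * N₀ := Nat.mul_le_mul hnN hnN
        _ = N₀ ^ 2 := (sq N₀).symm
    exact_mod_cast h1
  have hkK : ⌈Real.exp (((N₀:ℝ)^2 * Real.log 2 + 1)/e₀)⌉₊ ≤ k :=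
    le_trans (le_max_right _ _) hk
  have hx : Real.exp (((N₀:ℝ)^2 * Real.log 2 + 1)/e₀) ≤ (k:ℝ) :=
    (Nat.le_ceil _).trans (by exact_mod_cast hkK)
  have hlogK : ((N₀:ℝ)^2 * Real.log 2 + 1)/e₀ ≤ Real.log k :=
    (Real.le_log_iff_exp_le hk0).mpr hx
  have h11 : (N₀:ℝ)^2 * Real.log 2 + 1 ≤ e₀ * Real.log k := by
    rw [div_le_iff₀ he₀] at hlogK
    linarith [hlogK]
  have hcore := core_ineq' ε hε k hk2 n m hnm ρ hρ hρk d hinj hdvd hge hclose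
  have hlog2 : 0 < Real.log 2 := Real.log_pos one_lt_two
  have h12 : e₀ * Real.log k ≤ ((n:ℝ) * ε - 1 - ε^4 * (n.choose 2:ℝ)) * Real.log k :=
    mul_le_mul_of_nonneg_right hE hL.le
  have h13 : (n.choose 2 : ℝ) * Real.log 2 ≤ (N₀:ℝ)^2 * Real.log 2 :=
    mul_le_mul_of_nonneg_right hpN hlog2.le
  linarith
end

section
/- Let k, k1, k2, k3 ∈ ℤ with k2 + k3 - k1 = k, |k2| ≥ |k3|, and suppose (k1,k2,k3) lies in the region 𝕏_L ∪ 𝕏_N (i.e. either |k2| < 2^{-20}|k|, or the complement of the high-high, low-low and semilinear regions). Then |Δ| ~ ⟨k⟩⟨k1⟩, where Δ = k² + k1² - k2² - k3² = 2(k-k2)(k-k3), i.e. there exist absolute constants 0 < c < C with c·⟨k⟩⟨k1⟩ ≤ |Δ| ≤ C·⟨k⟩⟨k1⟩. -/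
/-- The Japanese bracket `⟨k⟩ = √(1 + k²)` of an integer. -/
noncomputable def jb (k : ℤ) : ℝ := Real.sqrt (1 + (k : ℝ) ^ 2)

lemma abs_le_jb (n : ℤ) : |(n : ℝ)| ≤ jb n := by
  rw [jb, ← Real.sqrt_sq_eq_abs]
  exact Real.sqrt_le_sqrt (by nlinarith)

lemma jb_le (n : ℤ) : jb n ≤ 1 + |(n : ℝ)| := by
  rw [jb, show (1:ℝ) + |(n:ℝ)| = Real.sqrt ((1 + |(n:ℝ)|)^2) from
    (Real.sqrt_sq (by positivity)).symm]
  apply Real.sqrt_le_sqrt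
  nlinarith [abs_nonneg ((n:ℝ)), sq_abs ((n:ℝ))]

lemma key_real (k k1 m : ℤ) (hk : 1 ≤ |k|) (hk1 : 1 ≤ |k1|)
    (h1 : |k| * |k1| ≤ 2 * |m|) (h2 : |m| ≤ 8 * (|k| * |k1|)) :
    (1/8 : ℝ) * (jb k * jb k1) ≤ |(m : ℝ)| ∧
    |(m : ℝ)| ≤ 16 * (jb k * jb k1) := by
  have hk' : (1:ℝ) ≤ |(k:ℝ)| := by exact_mod_cast hk
  have hk1' : (1:ℝ) ≤ |(k1:ℝ)| := by exact_mod_cast hk1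
  have h1' : |(k:ℝ)| * |(k1:ℝ)| ≤ 2 * |(m:ℝ)| := by exact_mod_cast h1
  have h2' : |(m:ℝ)| ≤ 8 * (|(k:ℝ)| * |(k1:ℝ)|) := by exact_mod_cast h2
  have j1 : jb k ≤ 2 * |(k:ℝ)| := le_trans (jb_le k) (by linarith)
  have j2 : jb k1 ≤ 2 * |(k1:ℝ)| := le_trans (jb_le k1) (by linarith)
  have j1' : |(k:ℝ)| ≤ jb k := abs_le_jb k
  have j2' : |(k1:ℝ)| ≤ jb k1 := abs_le_jb k1
  have jn1 : (0:ℝ) ≤ jb k := le_trans (abs_nonneg _) j1'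
  have jn2 : (0:ℝ) ≤ jb k1 := le_trans (abs_nonneg _) j2'
  constructor
  · nlinarith [mul_le_mul j1 j2 jn2 (by linarith : (0:ℝ) ≤ 2 * |(k:ℝ)|)]
  · nlinarith [mul_le_mul j1' j2' (abs_nonneg ((k1:ℝ))) jn1]

theorem stmt8 :
    ∃ c C : ℝ, 0 < c ∧ c < C ∧
      ∀ k k1 k2 k3 : ℤ, k2 + k3 - k1 = k → |k3| ≤ |k2| → k ≠ k2 → k ≠ k3 →
      ((2 ^ 20 * |k2| < |k|) ∨
        (¬ (|k| ≤ 2 ^ 20 * |k3|) ∧ ¬ (2 ^ 20 * |k2| < |k|) ∧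
         ¬ (|k1| ≤ 2 ^ 10 * |k3| ∧ 2 ^ 20 * |k3| < |k|))) →
      c * (jb k * jb k1) ≤ |((k ^ 2 + k1 ^ 2 - k2 ^ 2 - k3 ^ 2 : ℤ) : ℝ)| ∧
      |((k ^ 2 + k1 ^ 2 - k2 ^ 2 - k3 ^ 2 : ℤ) : ℝ)| ≤ C * (jb k * jb k1) := by
  refine ⟨1/8, 16, by norm_num, by norm_num, ?_⟩
  intro k k1 k2 k3 hsum habs hne2 hne3 hcase
  have hΔ : (k ^ 2 + k1 ^ 2 - k2 ^ 2 - k3 ^ 2 : ℤ) = 2 * ((k - k2) * (k - k3)) := by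
    linear_combination (k - k1 - k2 - k3) * hsum
  have e2 : k - k2 = k3 - k1 := by omega
  have e3 : k - k3 = k2 - k1 := by omega
  have habsΔ : |(k ^ 2 + k1 ^ 2 - k2 ^ 2 - k3 ^ 2 : ℤ)| = 2 * (|k - k2| * |k - k3|) := by
    rw [hΔ, abs_mul, abs_mul]
    norm_num
  -- triangle inequality facts
  have B2l : |k| - |k2| ≤ |k - k2| := abs_sub_abs_le_abs_sub k k2
  have B2u : |k - k2| ≤ |k| + |k2| := abs_sub k k2
  have B2l' : |k1| - |k3| ≤ |k - k2| := by rw [e2, abs_sub_comm]; exact abs_sub_abs_le_abs_sub k1 k3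
  have B2u' : |k - k2| ≤ |k1| + |k3| := by rw [e2, abs_sub_comm]; exact abs_sub k1 k3
  have B3l : |k| - |k3| ≤ |k - k3| := abs_sub_abs_le_abs_sub k k3
  have B3u : |k - k3| ≤ |k| + |k3| := abs_sub k k3
  have B3l' : |k1| - |k2| ≤ |k - k3| := by rw [e3, abs_sub_comm]; exact abs_sub_abs_le_abs_sub k1 k2
  have B3u' : |k - k3| ≤ |k1| + |k2| := by rw [e3, abs_sub_comm]; exact abs_sub k1 k2
  have h2n : (0:ℤ) ≤ |k2| := abs_nonneg _
  have h3n : (0:ℤ) ≤ |k3| := abs_nonneg _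
  have hA2n : (0:ℤ) ≤ |k - k2| := abs_nonneg _
  have hA3n : (0:ℤ) ≤ |k - k3| := abs_nonneg _
  have key : 1 ≤ |k| ∧ 1 ≤ |k1| ∧
      |k| * |k1| ≤ 2 * |(k ^ 2 + k1 ^ 2 - k2 ^ 2 - k3 ^ 2 : ℤ)| ∧
      |(k ^ 2 + k1 ^ 2 - k2 ^ 2 - k3 ^ 2 : ℤ)| ≤ 8 * (|k| * |k1|) := by
    rw [habsΔ]
    rcases hcase with hL | ⟨hN1, hN2, hN3⟩
    · -- case L : 2^20 |k2| < |k|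
      have hk : 1 ≤ |k| := by omega
      have hc2 : 2 ^ 20 * |k2| < |k| := hL
      have hk1 : 1 ≤ |k1| := by omega
      refine ⟨hk, hk1, ?_, ?_⟩
      · nlinarith [mul_le_mul B2l B3l (by omega) hA2n]
      · nlinarith [mul_le_mul B2u B3u hA3n (by omega : (0:ℤ) ≤ |k| + |k2|)]
    · -- case N
      push_neg at hN1 hN2 hN3
      have hc3 : 2 ^ 20 * |k3| < |k| := hN1
      have hk : 1 ≤ |k| := by omega
      have hc1 : 2 ^ 10 * |k3| < |k1| := by
        by_contra h
        push_neg at h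
        exact absurd (hN3 h) (by omega)
      have hk1 : 1 ≤ |k1| := by omega
      refine ⟨hk, hk1, ?_, ?_⟩
      · have p1 : |k1| ≤ 2 * |k - k2| := by linarith
        have p2 : |k| ≤ 2 * |k - k3| := by linarith
        nlinarith [mul_le_mul p2 p1 (abs_nonneg k1) (by linarith : (0:ℤ) ≤ 2 * |k - k3|)]
      · have q1 : |k - k2| ≤ 2 * |k1| := by linarith
        have q2 : |k - k3| ≤ 2 * |k| := by linarith
        nlinarith [mul_le_mul q1 q2 hA3n (by linarith : (0:ℤ) ≤ 2 * |k1|)]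
  obtain ⟨hk, hk1, h1, h2⟩ := key
  exact key_real k k1 _ hk hk1 h1 h2
end

section
/- Let 1 < q̃ < q < ∞ and b ∈ ℝ with b < 1 < b + 1/q. Let g : ℝ → ℂ be smooth with g(0) = 0 and define ĝ₂(σ) = 1_{|σ|<T^{-1}} ĝ(σ). Then for φ Schwartz with φ(0-neighborhood) cut-off structure and φ_T(t) = φ(t/T), the convolution satisfies |(ĝ₂ * φ̂_T)(λ)| ≲_B T⟨Tλ⟩^{-B} ∫_ℝ min(1, |Tσ|)|ĝ(σ)| dσ for every B > 0. -/
open MeasureTheory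

/-- uniform polynomial decay bound for a Schwartz function -/
lemma schwartz_decay_bound (f : SchwartzMap ℝ ℂ) (k : ℕ) :
    ∃ C, 0 < C ∧ ∀ x : ℝ, (1 + |x|) ^ k * ‖f x‖ ≤ C := by
  refine ⟨2 ^ k * (Finset.Iic (k, 0)).sup (fun m => SchwartzMap.seminorm ℝ m.1 m.2) f + 1,
    by positivity, fun x => ?_⟩
  have h := SchwartzMap.one_add_le_sup_seminorm_apply (𝕜 := ℝ) (m := (k, 0)) le_rfl le_rfl f x
  simpa [Real.norm_eq_abs] using h.trans (by linarith [h])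

lemma sqrt_rpow_le_pow (B : ℝ) (k : ℕ) (hB : 0 ≤ B) (hBk : B ≤ (k : ℝ)) (y : ℝ) :
    Real.sqrt (1 + y ^ 2) ^ B ≤ (1 + |y|) ^ k := by
  have h1 : (1 : ℝ) ≤ 1 + |y| := by linarith [abs_nonneg y]
  have hs : Real.sqrt (1 + y ^ 2) ≤ 1 + |y| := by
    rw [show (1 : ℝ) + y ^ 2 = |y| ^ 2 + 1 by rw [sq_abs]; ring]
    have := Real.sqrt_le_sqrt (show |y| ^ 2 + 1 ≤ (1 + |y|) ^ 2 by nlinarith [abs_nonneg y])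
    calc Real.sqrt (|y| ^ 2 + 1) ≤ Real.sqrt ((1 + |y|) ^ 2) := this
      _ = 1 + |y| := Real.sqrt_sq (by positivity)
  calc Real.sqrt (1 + y ^ 2) ^ B ≤ (1 + |y|) ^ B :=
        Real.rpow_le_rpow (Real.sqrt_nonneg _) hs hB
    _ ≤ (1 + |y|) ^ (k : ℝ) := Real.rpow_le_rpow_of_exponent_le h1 hBk
    _ = (1 + |y|) ^ k := Real.rpow_natCast _ _

/-- if `(1+|y|)^k * A ≤ C` then `A ≤ C * sqrt(1+y²)^(-B)` for `0 < B ≤ k`. -/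
lemma decay_to_rpow {A C B : ℝ} {k : ℕ} (hB : 0 < B) (hBk : B ≤ (k : ℝ)) (hA : 0 ≤ A)
    (y : ℝ) (h : (1 + |y|) ^ k * A ≤ C) :
    A ≤ C * Real.sqrt (1 + y ^ 2) ^ (-B) := by
  have hs1 : (1 : ℝ) ≤ Real.sqrt (1 + y ^ 2) := by
    have := Real.sqrt_le_sqrt (show (1:ℝ) ≤ 1 + y ^ 2 by nlinarith [sq_nonneg y])
    simpa using this
  have hsB : (0 : ℝ) < Real.sqrt (1 + y ^ 2) ^ B :=
    Real.rpow_pos_of_pos (by linarith) B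
  rw [Real.rpow_neg (by linarith), ← div_eq_mul_inv, le_div_iff₀ hsB]
  calc A * Real.sqrt (1 + y ^ 2) ^ B ≤ A * (1 + |y|) ^ k := by
        exact mul_le_mul_of_nonneg_left (sqrt_rpow_le_pow B k hB.le hBk y) hA
    _ = (1 + |y|) ^ k * A := mul_comm _ _
    _ ≤ C := h

theorem stmt12 (φhat : SchwartzMap ℝ ℂ) (B : ℝ) (hB : 0 < B) :
    ∃ C : ℝ, 0 < C ∧ ∀ T : ℝ, 0 < T → T ≤ 1 →
      ∀ G : ℝ → ℂ, Integrable G → (∫ σ, G σ) = 0 →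
      ∀ lam : ℝ,
        ‖∫ σ, Set.indicator {σ : ℝ | |σ| < T⁻¹} G σ * ((T : ℂ) * φhat (T * (lam - σ)))‖ ≤
          C * T * (Real.sqrt (1 + (T * lam) ^ 2)) ^ (-B) *
            ∫ σ, min 1 |T * σ| * ‖G σ‖ := by
  set k := ⌈B⌉₊ with hkdef
  have hBk : B ≤ (k : ℝ) := Nat.le_ceil B
  obtain ⟨C₀, hC₀p, hC₀⟩ := schwartz_decay_bound φhat k
  obtain ⟨C₁, hC₁p, hC₁⟩ := schwartz_decay_bound (SchwartzMap.derivCLM ℝ ℂ φhat) k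
  refine ⟨C₀ + C₁ * 2 ^ k, by positivity, ?_⟩
  intro T hT hT1 G hG hG0 lam
  set S : ℝ := Real.sqrt (1 + (T * lam) ^ 2) ^ (-B) with hSdef
  have hSpos : 0 < S := Real.rpow_pos_of_pos (Real.sqrt_pos.mpr (by positivity)) _
  set s : Set ℝ := {σ : ℝ | |σ| < T⁻¹} with hsdef
  have hsm : MeasurableSet s := (isOpen_lt continuous_abs continuous_const).measurableSet
  set f1 : ℝ → ℂ := fun σ => Set.indicator s G σ * ((T : ℂ) * φhat (T * (lam - σ))) with hf1def
  set f2 : ℝ → ℂ := fun σ => G σ * ((T : ℂ) * φhat (T * lam)) with hf2def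
  -- bound for φhat values
  have hφbdd : ∀ x : ℝ, ‖φhat x‖ ≤ C₀ := by
    intro x
    have h := hC₀ x
    have h1 : (1 : ℝ) ≤ (1 + |x|) ^ k := one_le_pow₀ (by linarith [abs_nonneg x])
    nlinarith [norm_nonneg (φhat x)]
  have hf1int : Integrable f1 := by
    have hind : Integrable (Set.indicator s G) := hG.indicator hsm
    have hmeas : AEStronglyMeasurable (fun σ : ℝ => (T : ℂ) * φhat (T * (lam - σ))) volume := by
      exact (continuous_const.mul (φhat.continuous.comp (by continuity))).aestronglyMeasurable
    have := hind.bdd_mul (c := T * C₀) hmeas (Filter.Eventually.of_forall fun σ => by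
      rw [norm_mul, Complex.norm_real, Real.norm_eq_abs, abs_of_pos hT]
      exact mul_le_mul_of_nonneg_left (hφbdd _) hT.le)
    exact this.congr (by filter_upwards with σ; ring)
  have hf2int : Integrable f2 := hG.mul_const _
  have hf2zero : (∫ σ, f2 σ) = 0 := by
    rw [hf2def]
    rw [integral_mul_const, hG0, zero_mul]
  -- the dominating function
  set m : ℝ → ℝ := fun σ => min 1 |T * σ| * ‖G σ‖ with hmdef
  have hmint : Integrable m := by
    refine hG.norm.mono ?_ ?_
    · exact ((continuous_const.min (continuous_abs.comp (continuous_const.mul continuous_id))).aestronglyMeasurable).mul hG.norm.aestronglyMeasurable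
    · filter_upwards with σ
      have h0 : (0:ℝ) ≤ min 1 |T * σ| := le_min zero_le_one (abs_nonneg _)
      have h1 : min 1 |T * σ| ≤ 1 := min_le_left _ _
      simp only [hmdef, Real.norm_eq_abs, abs_of_nonneg (mul_nonneg h0 (norm_nonneg _)), abs_norm]
      nlinarith [norm_nonneg (G σ)]
  set K : ℝ := (C₀ + C₁ * 2 ^ k) * T * S with hKdef
  have hKpos : 0 < K := by positivity
  -- pointwise bound
  have hpt : ∀ σ : ℝ, ‖f1 σ - f2 σ‖ ≤ K * m σ := by
    intro σ
    by_cases hσ : σ ∈ s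
    · -- |σ| < T⁻¹, so |Tσ| < 1
      have hTσ : |T * σ| < 1 := by
        rw [abs_mul, abs_of_pos hT]
        calc T * |σ| < T * T⁻¹ := by
              exact mul_lt_mul_of_pos_left hσ hT
          _ = 1 := mul_inv_cancel₀ hT.ne'
      have hmin : min 1 |T * σ| = |T * σ| := min_eq_right hTσ.le
      -- mean value estimate
      have hderivbound : ∀ x ∈ Metric.closedBall (T * lam) 1,
          ‖deriv φhat x‖ ≤ C₁ * 2 ^ k * S := by
        intro x hx
        rw [Metric.mem_closedBall, Real.dist_eq] at hx
        have h2 : 1 + |T * lam| ≤ 2 * (1 + |x|) := by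
          have : |T * lam| ≤ |x| + 1 := by
            calc |T * lam| = |x + (T * lam - x)| := by ring_nf
              _ ≤ |x| + |T * lam - x| := abs_add_le _ _
              _ ≤ |x| + 1 := by rw [abs_sub_comm] at hx; linarith
          linarith [abs_nonneg x]
        have hkey : (1 + |T * lam|) ^ k * ‖deriv φhat x‖ ≤ C₁ * 2 ^ k := by
          have hd := hC₁ x
          rw [SchwartzMap.derivCLM_apply] at hd
          calc (1 + |T * lam|) ^ k * ‖deriv φhat x‖
              ≤ (2 * (1 + |x|)) ^ k * ‖deriv φhat x‖ := by
                exact mul_le_mul_of_nonneg_right (pow_le_pow_left₀ (by positivity) h2 k) (norm_nonneg _)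
            _ = 2 ^ k * ((1 + |x|) ^ k * ‖deriv φhat x‖) := by rw [mul_pow]; ring
            _ ≤ 2 ^ k * C₁ := by
                exact mul_le_mul_of_nonneg_left hd (by positivity)
            _ = C₁ * 2 ^ k := by ring
        exact decay_to_rpow hB hBk (norm_nonneg _) (T * lam) hkey
      have hmvt : ‖φhat (T * (lam - σ)) - φhat (T * lam)‖ ≤ (C₁ * 2 ^ k * S) * |T * σ| := by
        have hmem1 : T * lam ∈ Metric.closedBall (T * lam) 1 := Metric.mem_closedBall_self zero_le_one
        have hmem2 : T * (lam - σ) ∈ Metric.closedBall (T * lam) 1 := by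
          rw [Metric.mem_closedBall, Real.dist_eq]
          have : T * (lam - σ) - T * lam = -(T * σ) := by ring
          rw [this, abs_neg]; exact hTσ.le
        have h := (convex_closedBall (T * lam) 1).norm_image_sub_le_of_norm_deriv_le
          (f := fun x => φhat x) (fun x _ => φhat.differentiableAt) hderivbound hmem1 hmem2
        calc ‖φhat (T * (lam - σ)) - φhat (T * lam)‖
            ≤ (C₁ * 2 ^ k * S) * ‖T * (lam - σ) - T * lam‖ := by simpa using h
          _ = (C₁ * 2 ^ k * S) * |T * σ| := by
              rw [Real.norm_eq_abs, show T * (lam - σ) - T * lam = -(T * σ) by ring, abs_neg]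
      have heq : f1 σ - f2 σ = G σ * ((T : ℂ) * (φhat (T * (lam - σ)) - φhat (T * lam))) := by
        simp only [hf1def, hf2def, Set.indicator_of_mem hσ]
        ring
      have hms : m σ = |T * σ| * ‖G σ‖ := by simp only [hmdef]; rw [hmin]
      rw [heq, norm_mul, norm_mul, Complex.norm_real, Real.norm_eq_abs, abs_of_pos hT, hms]
      calc ‖G σ‖ * (T * ‖φhat (T * (lam - σ)) - φhat (T * lam)‖)
          ≤ ‖G σ‖ * (T * ((C₁ * 2 ^ k * S) * |T * σ|)) := by
            have := mul_le_mul_of_nonneg_left hmvt hT.le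
            exact mul_le_mul_of_nonneg_left this (norm_nonneg _)
        _ ≤ K * (|T * σ| * ‖G σ‖) := by
            rw [hKdef]
            have hS : 0 ≤ S := hSpos.le
            have : ‖G σ‖ * (T * (C₁ * 2 ^ k * S * |T * σ|))
                = (C₁ * 2 ^ k) * T * S * (|T * σ| * ‖G σ‖) := by ring
            rw [this]
            have h1 : (C₁ * 2 ^ k) * T * S ≤ (C₀ + C₁ * 2 ^ k) * T * S := by
              have h2 : (C₁ * 2 ^ k : ℝ) ≤ C₀ + C₁ * 2 ^ k := by linarith
              exact mul_le_mul_of_nonneg_right (mul_le_mul_of_nonneg_right h2 hT.le) hS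
            exact mul_le_mul_of_nonneg_right h1 (by positivity)
    · -- |Tσ| ≥ 1
      have hTσ : 1 ≤ |T * σ| := by
        rw [hsdef] at hσ
        simp only [Set.mem_setOf_eq, not_lt] at hσ
        rw [abs_mul, abs_of_pos hT]
        calc (1:ℝ) = T * T⁻¹ := (mul_inv_cancel₀ hT.ne').symm
          _ ≤ T * |σ| := mul_le_mul_of_nonneg_left hσ hT.le
      have hmin : min 1 |T * σ| = 1 := min_eq_left hTσ
      have heq : f1 σ - f2 σ = -(G σ * ((T : ℂ) * φhat (T * lam))) := by
        simp only [hf1def, hf2def, Set.indicator_of_notMem hσ]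
        ring
      have hφ : ‖φhat (T * lam)‖ ≤ C₀ * S :=
        decay_to_rpow hB hBk (norm_nonneg _) (T * lam) (hC₀ (T * lam))
      have hms : m σ = ‖G σ‖ := by simp only [hmdef]; rw [hmin, one_mul]
      rw [heq, norm_neg, norm_mul, norm_mul, Complex.norm_real, Real.norm_eq_abs, abs_of_pos hT, hms]
      calc ‖G σ‖ * (T * ‖φhat (T * lam)‖)
          ≤ ‖G σ‖ * (T * (C₀ * S)) := by
            exact mul_le_mul_of_nonneg_left (mul_le_mul_of_nonneg_left hφ hT.le) (norm_nonneg _)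
        _ ≤ K * ‖G σ‖ := by
            rw [hKdef]
            have : ‖G σ‖ * (T * (C₀ * S)) = C₀ * T * S * ‖G σ‖ := by ring
            rw [this]
            have h1 : C₀ * T * S ≤ (C₀ + C₁ * 2 ^ k) * T * S := by
              have hp : (0:ℝ) < C₁ * 2 ^ k := by positivity
              have h2 : (C₀ : ℝ) ≤ C₀ + C₁ * 2 ^ k := by linarith
              exact mul_le_mul_of_nonneg_right (mul_le_mul_of_nonneg_right h2 hT.le) hSpos.le
            exact mul_le_mul_of_nonneg_right h1 (norm_nonneg _)
  -- assemble
  have hI : (∫ σ, f1 σ) = ∫ σ, (f1 σ - f2 σ) := by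
    rw [integral_sub hf1int hf2int, hf2zero, sub_zero]
  calc ‖∫ σ, f1 σ‖ = ‖∫ σ, (f1 σ - f2 σ)‖ := by rw [hI]
    _ ≤ ∫ σ, ‖f1 σ - f2 σ‖ := norm_integral_le_integral_norm _
    _ ≤ ∫ σ, K * m σ := by
        refine integral_mono_of_nonneg ?_ (hmint.const_mul K) ?_
        · filter_upwards with σ; exact norm_nonneg _
        · filter_upwards with σ; exact hpt σ
    _ = K * ∫ σ, m σ := integral_const_mul K _
    _ = (C₀ + C₁ * 2 ^ k) * T * S * ∫ σ, m σ := by rw [hKdef]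
end

section
/- Let 1 < q̃ < q < ∞ and b < 1 < b + 1/q. For the Schur-type kernel R(λ,σ) = 1_{|σ|≥T^{-1}}·T|φ̂(T(λ-σ))|·⟨λ⟩^b/⟨σ⟩^b with φ Schwartz, the operator f ↦ ∫R(λ,σ)f(σ)dσ is bounded from L^{q̃}(ℝ) to L^q(ℝ) with norm ≲ T^{1/q - 1/q̃}. -/
open MeasureTheory Real ENNReal NNReal

/-- Three-function Hölder inequality for lintegrals. -/
lemma holder3 {α : Type*} [MeasurableSpace α] (μ : Measure α)
    {p1 p2 p3 : ℝ} (h1 : 1 < p1) (h2 : 1 < p2) (h3 : 1 < p3)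
    (hsum : 1/p1 + 1/p2 + 1/p3 = 1)
    {u v w : α → ℝ≥0∞} (hu : AEMeasurable u μ) (hv : AEMeasurable v μ)
    (hw : AEMeasurable w μ) :
    ∫⁻ a, u a * v a * w a ∂μ ≤
      (∫⁻ a, u a ^ p1 ∂μ) ^ (1/p1) * (∫⁻ a, v a ^ p2 ∂μ) ^ (1/p2) *
        (∫⁻ a, w a ^ p3 ∂μ) ^ (1/p3) := by
  have h10 : (0:ℝ) < p1 := by linarith
  have h20 : (0:ℝ) < p2 := by linarith
  have h30 : (0:ℝ) < p3 := by linarith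
  set s : ℝ := (1/p2 + 1/p3)⁻¹ with hs
  have hs0 : (0:ℝ) < 1/p2 + 1/p3 := by positivity
  have hss : 1/s = 1/p2 + 1/p3 := by rw [hs, one_div, inv_inv]
  have hsp : 0 < s := by rw [hs]; positivity
  have hconj1 : p1.HolderConjugate s := by
    refine ⟨?_, by linarith, hsp⟩; rw [inv_one]
    rw [← one_div p1, ← one_div s, hss]; linarith
  have hsp2 : s < p2 := by
    have h3p : (0:ℝ) < 1/p3 := by positivity
    have h : 1/p2 < 1/s := by rw [hss]; linarith
    exact (one_div_lt_one_div h20 hsp).mp h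
  have hconj2 : (p2/s).HolderConjugate (p3/s) := by
    refine ⟨?_, div_pos h20 hsp, div_pos h30 hsp⟩; rw [inv_one]
    rw [← one_div (p2/s), ← one_div (p3/s), one_div_div, one_div_div]
    have h : s/p2 + s/p3 = s * (1/p2 + 1/p3) := by ring
    rw [h, ← hss]
    field_simp
  calc ∫⁻ a, u a * v a * w a ∂μ
      = ∫⁻ a, (u * (v * w)) a ∂μ := by
        refine lintegral_congr fun a => ?_
        simp [mul_assoc]
    _ ≤ (∫⁻ a, u a ^ p1 ∂μ) ^ (1/p1) * (∫⁻ a, (v * w) a ^ s ∂μ) ^ (1/s) :=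
        ENNReal.lintegral_mul_le_Lp_mul_Lq μ hconj1 hu (hv.mul hw)
    _ ≤ (∫⁻ a, u a ^ p1 ∂μ) ^ (1/p1) *
          ((∫⁻ a, v a ^ p2 ∂μ) ^ (1/p2) * (∫⁻ a, w a ^ p3 ∂μ) ^ (1/p3)) := by
        gcongr
        have step : ∫⁻ a, (v * w) a ^ s ∂μ ≤
            (∫⁻ a, (v a ^ s) ^ (p2/s) ∂μ) ^ (1/(p2/s)) *
              (∫⁻ a, (w a ^ s) ^ (p3/s) ∂μ) ^ (1/(p3/s)) := by
          have : ∫⁻ a, (v * w) a ^ s ∂μ = ∫⁻ a, ((fun a => v a ^ s) * fun a => w a ^ s) a ∂μ := by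
            refine lintegral_congr fun a => ?_
            simp [ENNReal.mul_rpow_of_nonneg _ _ hsp.le]
          rw [this]
          exact ENNReal.lintegral_mul_le_Lp_mul_Lq μ hconj2 (hv.pow_const s) (hw.pow_const s)
        have ev : ∀ a, (v a ^ s) ^ (p2/s) = v a ^ p2 := fun a => by
          rw [← ENNReal.rpow_mul, mul_div_cancel₀ _ hsp.ne']
        have ew : ∀ a, (w a ^ s) ^ (p3/s) = w a ^ p3 := fun a => by
          rw [← ENNReal.rpow_mul, mul_div_cancel₀ _ hsp.ne']
        simp only [ev, ew] at step
        calc (∫⁻ a, (v * w) a ^ s ∂μ) ^ (1/s)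
            ≤ ((∫⁻ a, v a ^ p2 ∂μ) ^ (1/(p2/s)) * (∫⁻ a, w a ^ p3 ∂μ) ^ (1/(p3/s))) ^ (1/s) :=
              ENNReal.rpow_le_rpow step (by positivity)
          _ = (∫⁻ a, v a ^ p2 ∂μ) ^ (1/p2) * (∫⁻ a, w a ^ p3 ∂μ) ^ (1/p3) := by
              rw [ENNReal.mul_rpow_of_nonneg _ _ (by positivity : (0:ℝ) ≤ 1/s),
                ← ENNReal.rpow_mul, ← ENNReal.rpow_mul]
              congr 1 <;> · congr 1; field_simp
    _ = _ := by rw [mul_assoc]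

/-- Young's convolution inequality for lintegrals on ℝ. -/
lemma young_conv {K g : ℝ → ℝ≥0∞} (hK : Measurable K) (hg : AEMeasurable g volume)
    {q qt β : ℝ} (hq : 1 < q) (hqt : 1 < qt) (hqtq : qt < q) (hβ : 1/β = 1 + 1/q - 1/qt) :
    ∫⁻ lam, (∫⁻ σ, K (lam - σ) * g σ) ^ q ≤
      (∫⁻ x, K x ^ β) ^ (q/β) * (∫⁻ x, g x ^ qt) ^ (q/qt) := by
  have hq0 : (0:ℝ) < q := by linarith
  have hqt0 : (0:ℝ) < qt := by linarith
  have hinvq : 1/q < 1 := by rw [div_lt_one hq0]; exact hq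
  have hinvqt : 1/qt < 1 := by rw [div_lt_one hqt0]; exact hqt
  have hqq : 1/q < 1/qt := one_div_lt_one_div_of_lt hqt0 hqtq
  have hq0' := hq0.ne'
  have hqt0' := hqt0.ne'
  have hβpos' : (0:ℝ) < 1/β := by
    rw [hβ]; have : (0:ℝ) < 1/q := by positivity
    linarith
  have hβ0 : (0:ℝ) < β := one_div_pos.mp hβpos'
  have hβ0' := hβ0.ne'
  set r1 : ℝ := 1/(1 - 1/qt) with hr1def
  set r2 : ℝ := 1/(1/qt - 1/q) with hr2def
  have hd1 : (0:ℝ) < 1 - 1/qt := by linarith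
  have hd2 : (0:ℝ) < 1/qt - 1/q := by linarith
  have hr1inv : 1/r1 = 1 - 1/qt := by rw [hr1def, one_div_one_div]
  have hr2inv : 1/r2 = 1/qt - 1/q := by rw [hr2def, one_div_one_div]
  have hr1 : 1 < r1 := by
    rw [hr1def, lt_div_iff₀ hd1]
    have : (0:ℝ) < 1/qt := by positivity
    linarith
  have hr2 : 1 < r2 := by
    rw [hr2def, lt_div_iff₀ hd2]
    have : (0:ℝ) < 1/q := by positivity
    linarith
  have hr10 : (0:ℝ) < r1 := by linarith
  have hr20 : (0:ℝ) < r2 := by linarith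
  have hsum : 1/q + 1/r1 + 1/r2 = 1 := by rw [hr1inv, hr2inv]; ring
  have he1 : β*(1/q) + β*(1/r1) = 1 := by
    have h : (1:ℝ)/q + (1 - 1/qt) = 1/β := by rw [hβ]; ring
    have : β*(1/q) + β*(1/r1) = β * (1/q + (1 - 1/qt)) := by rw [hr1inv]; ring
    rw [this, h]; field_simp
  have he2 : qt*(1/q) + qt*(1/r2) = 1 := by
    have : qt*(1/q) + qt*(1/r2) = qt * (1/qt) := by rw [hr2inv]; ring
    rw [this]; field_simp
  have key : ∀ a c : ℝ≥0∞, a * c = (a^β * c^qt)^(1/q) * a^(β*(1/r1)) * c^(qt*(1/r2)) := by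
    intro a c
    rw [ENNReal.mul_rpow_of_nonneg _ _ (by positivity : (0:ℝ) ≤ 1/q),
      ← ENNReal.rpow_mul, ← ENNReal.rpow_mul, mul_assoc, mul_mul_mul_comm,
      ← ENNReal.rpow_add_of_nonneg _ _ (by positivity) (by positivity),
      ← ENNReal.rpow_add_of_nonneg _ _ (by positivity) (by positivity),
      he1, he2, ENNReal.rpow_one, ENNReal.rpow_one]
  set IK : ℝ≥0∞ := ∫⁻ x, K x ^ β with hIK
  set Ig : ℝ≥0∞ := ∫⁻ x, g x ^ qt with hIg
  have hKm : ∀ lam : ℝ, Measurable fun σ : ℝ => K (lam - σ) := fun lam =>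
    hK.comp (measurable_const.sub measurable_id)
  have shiftK : ∀ lam : ℝ, ∫⁻ σ, K (lam - σ) ^ β = IK := by
    intro lam
    have h := lintegral_map (μ := (volume : Measure ℝ)) (hK.pow_const β)
      (show Measurable fun σ : ℝ => lam - σ from measurable_const.sub measurable_id)
    rw [Measure.map_sub_left_eq_self volume lam] at h
    exact h.symm
  have shiftK' : ∀ σ : ℝ, ∫⁻ lam, K (lam - σ) ^ β = IK := by
    intro σ
    have h := lintegral_map (μ := (volume : Measure ℝ)) (hK.pow_const β)
      (show Measurable fun lam : ℝ => lam - σ from measurable_id.sub measurable_const)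
    rw [map_sub_right_eq_self volume σ] at h
    exact h.symm
  have inner : ∀ lam : ℝ, (∫⁻ σ, K (lam - σ) * g σ) ≤
      (∫⁻ σ, K (lam - σ)^β * g σ^qt)^(1/q) * (IK^(1/r1) * Ig^(1/r2)) := by
    intro lam
    have h1 : (∫⁻ σ, K (lam - σ) * g σ) =
        ∫⁻ σ, ((K (lam-σ)^β * g σ^qt)^(1/q)) * (K (lam-σ)^(β*(1/r1))) * (g σ^(qt*(1/r2))) :=
      lintegral_congr fun σ => key _ _
    rw [h1]
    have hu : AEMeasurable (fun σ => (K (lam-σ)^β * g σ^qt)^(1/q)) volume :=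
      ((((hKm lam).pow_const β).aemeasurable.mul (hg.pow_const qt)).pow_const _)
    have hv : AEMeasurable (fun σ => K (lam-σ)^(β*(1/r1))) volume :=
      ((hKm lam).pow_const _).aemeasurable
    have hw : AEMeasurable (fun σ => g σ^(qt*(1/r2))) volume := hg.pow_const _
    have H := holder3 volume hq hr1 hr2 hsum hu hv hw
    have eu : ∀ σ : ℝ, ((K (lam-σ)^β * g σ^qt)^(1/q))^q = K (lam-σ)^β * g σ^qt := fun σ => by
      rw [← ENNReal.rpow_mul, one_div_mul_cancel hq0', ENNReal.rpow_one]
    have ev : ∀ σ : ℝ, (K (lam-σ)^(β*(1/r1)))^r1 = K (lam-σ)^β := fun σ => by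
      rw [← ENNReal.rpow_mul, mul_assoc, one_div_mul_cancel hr10.ne', mul_one]
    have ew : ∀ σ : ℝ, (g σ^(qt*(1/r2)))^r2 = g σ^qt := fun σ => by
      rw [← ENNReal.rpow_mul, mul_assoc, one_div_mul_cancel hr20.ne', mul_one]
    simp only [eu, ev, ew] at H
    rw [shiftK lam] at H
    calc ∫⁻ σ, ((K (lam-σ)^β * g σ^qt)^(1/q)) * (K (lam-σ)^(β*(1/r1))) * (g σ^(qt*(1/r2)))
        ≤ (∫⁻ σ, K (lam-σ)^β * g σ^qt)^(1/q) * IK^(1/r1) * Ig^(1/r2) := H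
      _ = (∫⁻ σ, K (lam-σ)^β * g σ^qt)^(1/q) * (IK^(1/r1) * Ig^(1/r2)) := by rw [mul_assoc]
  -- degenerate cases
  by_cases hIK0 : IK = 0
  · have hz : ∀ lam : ℝ, (∫⁻ σ, K (lam - σ) * g σ) = 0 := by
      intro lam
      have h := inner lam
      rw [hIK0, ENNReal.zero_rpow_of_pos (by positivity), zero_mul, mul_zero] at h
      exact le_antisymm h zero_le
    calc ∫⁻ lam, (∫⁻ σ, K (lam - σ) * g σ) ^ q = ∫⁻ lam : ℝ, (0:ℝ≥0∞) := by
          refine lintegral_congr fun lam => ?_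
          rw [hz lam, ENNReal.zero_rpow_of_pos hq0]
      _ = 0 := lintegral_zero
      _ ≤ _ := zero_le
  by_cases hIg0 : Ig = 0
  · have hz : ∀ lam : ℝ, (∫⁻ σ, K (lam - σ) * g σ) = 0 := by
      intro lam
      have h := inner lam
      rw [hIg0, ENNReal.zero_rpow_of_pos (by positivity), mul_zero, mul_zero] at h
      exact le_antisymm h zero_le
    calc ∫⁻ lam, (∫⁻ σ, K (lam - σ) * g σ) ^ q = ∫⁻ lam : ℝ, (0:ℝ≥0∞) := by
          refine lintegral_congr fun lam => ?_
          rw [hz lam, ENNReal.zero_rpow_of_pos hq0]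
      _ = 0 := lintegral_zero
      _ ≤ _ := zero_le
  by_cases hIKtop : IK = ⊤
  · have hne : Ig ^ (q/qt) ≠ 0 := by
      rw [ne_eq, ENNReal.rpow_eq_zero_iff]
      rintro (⟨h, -⟩ | ⟨-, hlt⟩)
      · exact hIg0 h
      · exact absurd hlt (not_lt.mpr (by positivity))
    have : IK ^ (q/β) * Ig ^ (q/qt) = ⊤ := by
      rw [hIKtop, ENNReal.top_rpow_of_pos (by positivity), ENNReal.top_mul hne]
    rw [this]; exact le_top
  by_cases hIgtop : Ig = ⊤
  · have hne : IK ^ (q/β) ≠ 0 := by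
      rw [ne_eq, ENNReal.rpow_eq_zero_iff]
      rintro (⟨h, -⟩ | ⟨-, hlt⟩)
      · exact hIK0 h
      · exact absurd hlt (not_lt.mpr (by positivity))
    have : IK ^ (q/β) * Ig ^ (q/qt) = ⊤ := by
      rw [hIgtop, ENNReal.top_rpow_of_pos (by positivity), ENNReal.mul_top hne]
    rw [this]; exact le_top
  -- main case
  have hcne : IK^(1/r1) * Ig^(1/r2) ≠ ⊤ := by
    apply ENNReal.mul_ne_top <;>
      exact ENNReal.rpow_ne_top_of_nonneg (by positivity) (by assumption)
  have tonelli : ∫⁻ lam, ∫⁻ σ, K (lam-σ)^β * g σ^qt = IK * Ig := by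
    have hprod : AEMeasurable (fun p : ℝ × ℝ => K (p.1 - p.2)^β * g p.2 ^ qt)
        ((volume : Measure ℝ).prod volume) := by
      refine AEMeasurable.mul ?_ ?_
      · exact ((hK.pow_const β).comp (measurable_fst.sub measurable_snd)).aemeasurable
      · exact (hg.pow_const qt).comp_quasiMeasurePreserving
          MeasureTheory.Measure.quasiMeasurePreserving_snd
    calc ∫⁻ lam, ∫⁻ σ, K (lam-σ)^β * g σ^qt
        = ∫⁻ σ, ∫⁻ lam, K (lam-σ)^β * g σ^qt := lintegral_lintegral_swap hprod
      _ = ∫⁻ σ, IK * g σ^qt := by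
          refine lintegral_congr fun σ => ?_
          rw [lintegral_mul_const _ (show Measurable fun lam : ℝ => K (lam - σ) ^ β from
            (hK.pow_const β).comp (measurable_id.sub measurable_const)), shiftK' σ]
      _ = IK * Ig := lintegral_const_mul' _ _ hIKtop
  calc ∫⁻ lam, (∫⁻ σ, K (lam - σ) * g σ) ^ q
      ≤ ∫⁻ lam, ((∫⁻ σ, K (lam-σ)^β * g σ^qt)^(1/q) * (IK^(1/r1) * Ig^(1/r2)))^q :=
        lintegral_mono fun lam => ENNReal.rpow_le_rpow (inner lam) hq0.le
    _ = ∫⁻ lam, (∫⁻ σ, K (lam-σ)^β * g σ^qt) * ((IK^(1/r1) * Ig^(1/r2)))^q := by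
        refine lintegral_congr fun lam => ?_
        rw [ENNReal.mul_rpow_of_nonneg _ _ hq0.le, ← ENNReal.rpow_mul,
          one_div_mul_cancel hq0', ENNReal.rpow_one]
    _ = (∫⁻ lam, ∫⁻ σ, K (lam-σ)^β * g σ^qt) * ((IK^(1/r1) * Ig^(1/r2)))^q :=
        lintegral_mul_const' _ _ (ENNReal.rpow_ne_top_of_nonneg hq0.le hcne)
    _ = (IK * Ig) * (IK^(q*(1/r1)) * Ig^(q*(1/r2))) := by
        rw [tonelli, ENNReal.mul_rpow_of_nonneg _ _ hq0.le, ← ENNReal.rpow_mul,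
          ← ENNReal.rpow_mul]
        congr 2 <;> ring
    _ = (IK^(1:ℝ) * IK^(q*(1/r1))) * (Ig^(1:ℝ) * Ig^(q*(1/r2))) := by
        rw [ENNReal.rpow_one, ENNReal.rpow_one]; ring
    _ = IK ^ ((1:ℝ) + q*(1/r1)) * Ig ^ ((1:ℝ) + q*(1/r2)) := by
        rw [ENNReal.rpow_add_of_nonneg _ _ zero_le_one (by positivity),
          ENNReal.rpow_add_of_nonneg _ _ zero_le_one (by positivity)]
    _ = IK ^ (q/β) * Ig ^ (q/qt) := by
        congr 1
        · congr 1
          rw [hr1inv]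
          have h : q/β = q * (1/β) := by ring
          rw [h, hβ]; field_simp; ring
        · congr 1
          rw [hr2inv]; field_simp; ring

set_option maxHeartbeats 3200000 in
theorem stmt13 (q qt b : ℝ) (h1 : 1 < qt) (h2 : qt < q) (hb : b < 1)
    (hbq : 1 < b + 1 / q) (φhat : SchwartzMap ℝ ℝ) :
    ∃ C : ℝ, 0 < C ∧ ∀ T : ℝ, 0 < T → T ≤ 1 →
      ∀ f : ℝ → ℝ, MemLp f (ENNReal.ofReal qt) volume →
      eLpNorm
        (fun lam => ∫ σ, (Set.indicator {σ : ℝ | T⁻¹ ≤ |σ|}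
          (fun σ => T * |φhat (T * (lam - σ))| *
            (Real.sqrt (1 + lam ^ 2)) ^ b / (Real.sqrt (1 + σ ^ 2)) ^ b) σ) * f σ)
        (ENNReal.ofReal q) volume
      ≤ ENNReal.ofReal (C * T ^ (1 / q - 1 / qt)) *
          eLpNorm f (ENNReal.ofReal qt) volume := by
  have hq1 : 1 < q := lt_trans h1 h2
  have hq0 : (0:ℝ) < q := by linarith
  have hqt0 : (0:ℝ) < qt := by linarith
  have hinvq : 1/q < 1 := by rw [div_lt_one hq0]; exact hq1
  have hinvqt : 1/qt < 1 := by rw [div_lt_one hqt0]; exact h1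
  have hqq : 1/q < 1/qt := one_div_lt_one_div_of_lt hqt0 h2
  have hb0 : 0 < b := by linarith
  set β : ℝ := 1/(1 + 1/q - 1/qt) with hβdef
  have hden : (0:ℝ) < 1 + 1/q - 1/qt := by
    have : (0:ℝ) < 1/q := by positivity
    linarith
  have hβinv : 1/β = 1 + 1/q - 1/qt := by rw [hβdef, one_div_one_div]
  have hβ0 : (0:ℝ) < β := by rw [hβdef]; positivity
  have h1β : (1:ℝ) ≤ β := by
    rw [hβdef]
    exact one_le_one_div hden (by linarith)
  clear_value β
  obtain ⟨C0, hC0pos, hC0⟩ := φhat.decay 0 0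
  obtain ⟨C3, hC3pos, hC3⟩ := φhat.decay 3 0
  have hφ : ∀ y : ℝ, |φhat y| * (1 + |y|) * (1 + y^2) ≤ 4*(C0+C3) := by
    intro y
    have h0 : |φhat y| ≤ C0 := by
      have := hC0 y
      simpa [norm_iteratedFDeriv_zero, Real.norm_eq_abs] using this
    have h3 : |y|^3 * |φhat y| ≤ C3 := by
      have := hC3 y
      simpa [norm_iteratedFDeriv_zero, Real.norm_eq_abs] using this
    have hm : 0 ≤ |φhat y| := abs_nonneg _
    have ht : 0 ≤ |y| := abs_nonneg _
    have hy2 : y^2 = |y|^2 := (sq_abs y).symm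
    nlinarith [mul_nonneg hm ht, mul_nonneg hm (mul_nonneg ht ht),
      mul_nonneg (mul_nonneg hm ht) (sq_nonneg (|y|-1)),
      mul_nonneg hm (sq_nonneg (|y|-1)), mul_nonneg hm (sq_nonneg (|y|+1))]
  set A : ℝ := 4*(C0+C3) with hAdef
  have hA0 : 0 < A := by rw [hAdef]; positivity
  clear_value A
  refine ⟨A * π ^ (1/β), by positivity, ?_⟩
  intro T hT hT1 f hf
  set K : ℝ → ℝ≥0∞ := fun x => ENNReal.ofReal (T * (A / (1 + (T*x)^2))) with hKdef
  have hKcont : Continuous fun x : ℝ => T * (A / (1 + (T*x)^2)) := by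
    apply continuous_const.mul
    apply continuous_const.div
    · continuity
    · intro x; positivity
  have hKmeas : Measurable K := ENNReal.measurable_ofReal.comp hKcont.measurable
  have hker : ∀ lam σ : ℝ, Set.indicator {σ : ℝ | T⁻¹ ≤ |σ|}
      (fun σ => T * |φhat (T * (lam - σ))| * (Real.sqrt (1 + lam ^ 2)) ^ b /
        (Real.sqrt (1 + σ ^ 2)) ^ b) σ ≤ T * (A / (1 + (T*(lam - σ))^2)) := by
    intro lam σ
    by_cases hσ : σ ∈ {σ : ℝ | T⁻¹ ≤ |σ|}
    swap
    · rw [Set.indicator_of_notMem hσ]; positivity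
    rw [Set.indicator_of_mem hσ]
    have hσ' : T⁻¹ ≤ |σ| := hσ
    set x := lam - σ with hxdef
    set u := Real.sqrt (1 + lam^2) with hudef
    set v := Real.sqrt (1 + σ^2) with hvdef
    have hu : 0 < u := Real.sqrt_pos.mpr (by positivity)
    have hv : 0 < v := Real.sqrt_pos.mpr (by positivity)
    have hvsq : v^2 = 1 + σ^2 := Real.sq_sqrt (by positivity)
    have habs : |σ| ≤ v := by
      rw [← Real.sqrt_sq_eq_abs]
      exact Real.sqrt_le_sqrt (by nlinarith)
    have hTv : T⁻¹ ≤ v := le_trans hσ' habs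
    have hvT : 1 ≤ v * T := by
      have h := mul_le_mul_of_nonneg_right hTv hT.le
      rwa [inv_mul_cancel₀ hT.ne'] at h
    have hle : u ≤ v + |x| := by
      rw [hudef, ← Real.sqrt_sq (by positivity : (0:ℝ) ≤ v + |x|)]
      apply Real.sqrt_le_sqrt
      have h2 : σ*(lam-σ) ≤ |σ| * |lam - σ| := by rw [← abs_mul]; exact le_abs_self _
      have h3 : σ*(lam-σ) ≤ v * |lam - σ| :=
        le_trans h2 (mul_le_mul_of_nonneg_right habs (abs_nonneg _))
      have hexp : (v + |x|)^2 = v^2 + 2*(v*|lam - σ|) + (lam-σ)^2 := by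
        rw [hxdef]; linear_combination sq_abs (lam - σ)
      have hid : lam^2 = σ^2 + 2*(σ*(lam-σ)) + (lam-σ)^2 := by ring
      rw [hexp, hvsq]
      linarith
    have hratio : u / v ≤ 1 + T * |x| := by
      rw [div_le_iff₀ hv]
      have h4 : (1:ℝ) * |x| ≤ v * T * |x| := mul_le_mul_of_nonneg_right hvT (abs_nonneg x)
      have hexp2 : (1 + T*|x|) * v = v + v * T * |x| := by ring
      linarith
    have hw1 : u ^ b / v ^ b ≤ 1 + T * |x| := by
      rw [← Real.div_rpow hu.le hv.le]
      rcases le_or_gt (u/v) 1 with h | h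
      · have h1' : (u/v) ^ b ≤ 1 := Real.rpow_le_one (by positivity) h hb0.le
        have h0 : 0 ≤ T * |x| := by positivity
        linarith
      · calc (u/v)^b ≤ (u/v)^(1:ℝ) := Real.rpow_le_rpow_of_exponent_le h.le hb.le
          _ = u/v := Real.rpow_one _
          _ ≤ 1 + T*|x| := hratio
    have hy : |T * x| = T * |x| := by rw [abs_mul, abs_of_pos hT]
    have hw2 : |φhat (T*x)| * (1 + T*|x|) ≤ A / (1 + (T*x)^2) := by
      rw [le_div_iff₀ (by positivity : (0:ℝ) < 1 + (T*x)^2)]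
      calc |φhat (T*x)| * (1 + T*|x|) * (1 + (T*x)^2)
          = |φhat (T*x)| * (1 + |T*x|) * (1 + (T*x)^2) := by rw [hy]
        _ ≤ A := hφ (T*x)
    calc T * |φhat (T * x)| * u ^ b / v ^ b
        = T * (|φhat (T*x)| * (u^b / v^b)) := by ring
      _ ≤ T * (|φhat (T*x)| * (1 + T*|x|)) := by
          apply mul_le_mul_of_nonneg_left _ hT.le
          exact mul_le_mul_of_nonneg_left hw1 (abs_nonneg _)
      _ ≤ T * (A / (1 + (T*x)^2)) := mul_le_mul_of_nonneg_left hw2 hT.le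
  have hbound : ∀ lam : ℝ, (‖∫ σ, (Set.indicator {σ : ℝ | T⁻¹ ≤ |σ|}
      (fun σ => T * |φhat (T * (lam - σ))| *
        (Real.sqrt (1 + lam ^ 2)) ^ b / (Real.sqrt (1 + σ ^ 2)) ^ b) σ) * f σ‖₊ : ℝ≥0∞)
      ≤ ∫⁻ σ, K (lam - σ) * (‖f σ‖₊ : ℝ≥0∞) := by
    intro lam
    refine le_trans (enorm_integral_le_lintegral_enorm _) (lintegral_mono fun σ => ?_)
    rw [enorm_mul]
    apply mul_le_mul_left
    rw [Real.enorm_eq_ofReal_abs]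
    simp only [hKdef]
    apply ENNReal.ofReal_le_ofReal
    have hnn : 0 ≤ Set.indicator {σ : ℝ | T⁻¹ ≤ |σ|}
        (fun σ => T * |φhat (T * (lam - σ))| *
          (Real.sqrt (1 + lam ^ 2)) ^ b / (Real.sqrt (1 + σ ^ 2)) ^ b) σ :=
      Set.indicator_nonneg (fun σ _ => by positivity) σ
    rw [abs_of_nonneg hnn]
    exact hker lam σ
  have hKpt : ∀ x : ℝ, K x ^ β ≤ ENNReal.ofReal ((T*A)^β * (1 + (T*x)^2)⁻¹) := by
    intro x
    simp only [hKdef]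
    rw [ENNReal.ofReal_rpow_of_nonneg (by positivity) hβ0.le]
    apply ENNReal.ofReal_le_ofReal
    have hs0 : (0:ℝ) < (1 + (T*x)^2)⁻¹ := by positivity
    have hs1 : (1 + (T*x)^2)⁻¹ ≤ 1 := by
      rw [inv_le_one_iff₀]
      right; nlinarith
    calc (T * (A/(1+(T*x)^2)))^β = ((T*A) * (1+(T*x)^2)⁻¹)^β := by
          rw [div_eq_mul_inv]; ring_nf
      _ = (T*A)^β * ((1+(T*x)^2)⁻¹)^β := Real.mul_rpow (by positivity) (by positivity)
      _ ≤ (T*A)^β * (1+(T*x)^2)⁻¹ := by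
          apply mul_le_mul_of_nonneg_left _ (by positivity)
          calc ((1+(T*x)^2)⁻¹)^β ≤ ((1+(T*x)^2)⁻¹)^(1:ℝ) :=
                Real.rpow_le_rpow_of_exponent_ge hs0 hs1 h1β
            _ = (1+(T*x)^2)⁻¹ := Real.rpow_one _
  clear_value K
  have hq_ne : ENNReal.ofReal q ≠ 0 := (ENNReal.ofReal_pos.mpr hq0).ne'
  have hqt_ne : ENNReal.ofReal qt ≠ 0 := (ENNReal.ofReal_pos.mpr hqt0).ne'
  rw [eLpNorm_eq_lintegral_rpow_enorm_toReal hq_ne ENNReal.ofReal_ne_top,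
    eLpNorm_eq_lintegral_rpow_enorm_toReal hqt_ne ENNReal.ofReal_ne_top,
    ENNReal.toReal_ofReal hq0.le, ENNReal.toReal_ofReal hqt0.le]
  have hY := young_conv hKmeas hf.1.enorm hq1 h1 h2 hβinv
  set IK : ℝ≥0∞ := ∫⁻ x, K x ^ β with hIK
  set Ig : ℝ≥0∞ := ∫⁻ x, ‖f x‖ₑ ^ qt with hIg
  clear_value IK Ig
  have step1 : (∫⁻ lam, (‖∫ σ, (Set.indicator {σ : ℝ | T⁻¹ ≤ |σ|}
      (fun σ => T * |φhat (T * (lam - σ))| *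
        (Real.sqrt (1 + lam ^ 2)) ^ b / (Real.sqrt (1 + σ ^ 2)) ^ b) σ) * f σ‖₊ : ℝ≥0∞) ^ q)
        ^ (1/q) ≤ (IK ^ (q/β) * Ig ^ (q/qt)) ^ (1/q) := by
    apply ENNReal.rpow_le_rpow _ (by positivity)
    refine le_trans (lintegral_mono fun lam => ENNReal.rpow_le_rpow (hbound lam) hq0.le) hY
  have step2 : (IK ^ (q/β) * Ig ^ (q/qt)) ^ (1/q) = IK ^ (1/β) * Ig ^ (1/qt) := by
    rw [ENNReal.mul_rpow_of_nonneg _ _ (by positivity : (0:ℝ) ≤ 1/q),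
      ← ENNReal.rpow_mul, ← ENNReal.rpow_mul]
    congr 1
    · congr 1
      rw [div_mul_div_comm, mul_one, mul_comm β q, ← div_div, div_self hq0.ne']
    · congr 1
      rw [div_mul_div_comm, mul_one, mul_comm qt q, ← div_div, div_self hq0.ne']
  set D : ℝ := A * π ^ (1/β) * T ^ (1-1/β) with hDdef
  have hD0 : 0 < D := by rw [hDdef]; positivity
  clear_value D
  have hDβ : D^β = (T*A)^β * (T⁻¹*π) := by
    rw [hDdef, Real.mul_rpow (by positivity) (by positivity),
      Real.mul_rpow (by positivity) (by positivity),
      ← Real.rpow_mul Real.pi_pos.le, one_div_mul_cancel hβ0.ne', Real.rpow_one,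
      ← Real.rpow_mul hT.le,
      Real.mul_rpow hT.le hA0.le]
    have he : (1 - 1/β) * β = β - 1 := by
      rw [sub_mul, one_mul, one_div, inv_mul_cancel₀ hβ0.ne']
    rw [he, Real.rpow_sub hT, Real.rpow_one, div_eq_mul_inv]
    ring
  have hIKb : IK ≤ ENNReal.ofReal (D^β) := by
    rw [hIK]
    calc ∫⁻ x, K x ^ β ≤ ∫⁻ x, ENNReal.ofReal ((T*A)^β * (1 + (T*x)^2)⁻¹) :=
          lintegral_mono hKpt
      _ = ENNReal.ofReal ((T*A)^β) * ∫⁻ x, ENNReal.ofReal ((1 + (T*x)^2)⁻¹) := by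
          simp_rw [ENNReal.ofReal_mul (by positivity : (0:ℝ) ≤ (T*A)^β)]
          rw [lintegral_const_mul' _ _ ENNReal.ofReal_ne_top]
      _ = ENNReal.ofReal ((T*A)^β) * ENNReal.ofReal (T⁻¹ * π) := by
          congr 1
          have hint : Integrable fun x : ℝ => (1 + (T*x)^2)⁻¹ :=
            integrable_inv_one_add_sq.comp_mul_left' hT.ne'
          rw [← ofReal_integral_eq_lintegral_ofReal hint
            (Filter.Eventually.of_forall fun x => by positivity)]
          congr 1
          rw [MeasureTheory.Measure.integral_comp_mul_left (fun y : ℝ => (1+y^2)⁻¹) T,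
            integral_univ_inv_one_add_sq, abs_of_pos (inv_pos.mpr hT), smul_eq_mul]
      _ = ENNReal.ofReal ((T*A)^β * (T⁻¹*π)) :=
          (ENNReal.ofReal_mul (by positivity)).symm
      _ = ENNReal.ofReal (D^β) := by rw [hDβ]
  have hIK14 : IK ^ (1/β) ≤ ENNReal.ofReal D := by
    calc IK ^ (1/β) ≤ (ENNReal.ofReal (D^β)) ^ (1/β) :=
          ENNReal.rpow_le_rpow hIKb (by positivity)
      _ = ENNReal.ofReal ((D^β)^(1/β)) :=
          ENNReal.ofReal_rpow_of_nonneg (by positivity) (by positivity)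
      _ = ENNReal.ofReal D := by
          rw [← Real.rpow_mul hD0.le, mul_one_div, div_self hβ0.ne', Real.rpow_one]
  have hTle : T^(1-1/β) ≤ T^(1/q-1/qt) := by
    apply Real.rpow_le_rpow_of_exponent_ge hT hT1
    rw [hβinv]; linarith
  have hfinal : ENNReal.ofReal D ≤ ENNReal.ofReal (A * π^(1/β) * T^(1/q-1/qt)) := by
    apply ENNReal.ofReal_le_ofReal
    rw [hDdef]
    exact mul_le_mul_of_nonneg_left hTle (by positivity)
  calc (∫⁻ lam, (‖∫ σ, (Set.indicator {σ : ℝ | T⁻¹ ≤ |σ|}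
      (fun σ => T * |φhat (T * (lam - σ))| *
        (Real.sqrt (1 + lam ^ 2)) ^ b / (Real.sqrt (1 + σ ^ 2)) ^ b) σ) * f σ‖₊ : ℝ≥0∞) ^ q)
        ^ (1/q)
      ≤ (IK ^ (q/β) * Ig ^ (q/qt)) ^ (1/q) := step1
    _ = IK ^ (1/β) * Ig ^ (1/qt) := step2
    _ ≤ ENNReal.ofReal (A * π^(1/β) * T^(1/q-1/qt)) * Ig ^ (1/qt) :=
        mul_le_mul_left (hIK14.trans hfinal) _
end

section
/- Let a, b, c be integers with a + b - c = ℓ (ℓ fixed) and a² + b² - c² = n (n fixed), with 2(b-c)(ℓ-b) = Δ ≠ 0. Fix ε > 0 and suppose |a| ≥ max(|b|,|c|)^{10} and |ℓ - b| ≥ |Δ|^ε. Then the number of solutions (a,b,c) with |b| ≤ N and |c| ≤ N is O_ε(N^ε). -/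
open Finset in
lemma divisor_bound_aux (δ : ℝ) (hδ : 0 < δ) :
    ∃ C : ℝ, 0 < C ∧ ∀ m : ℕ, m ≠ 0 → ((m.divisors.card : ℝ)) ≤ C * (m : ℝ) ^ δ := by
  set L : ℝ := Real.log 2 with hLdef
  have hL0 : 0 < L := Real.log_pos (by norm_num)
  set K : ℝ := 1 + 1 / (δ * L) with hKdef
  have hK1 : 1 ≤ K := by
    have h0 : 0 ≤ 1 / (δ * L) := by positivity
    rw [hKdef]; linarith
  have hK0 : 0 < K := lt_of_lt_of_le one_pos hK1
  set B : ℕ := ⌈(2:ℝ) ^ (1/δ)⌉₊ with hBdef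
  refine ⟨K ^ B, by positivity, ?_⟩
  intro m hm
  have key : ∀ p ∈ m.primeFactors,
      ((m.factorization p + 1 : ℕ) : ℝ) ≤
        (if p ≤ B then K else 1) * ((p:ℝ) ^ (m.factorization p)) ^ δ := by
    intro p hp
    have hp2 : 2 ≤ p := (Nat.prime_of_mem_primeFactors hp).two_le
    set a : ℕ := m.factorization p with hadef
    have hppos : (0:ℝ) < (p:ℝ) := by positivity
    have hpa : ((2:ℝ) ^ a) ^ δ ≤ ((p:ℝ)^a)^δ := by
      apply Real.rpow_le_rpow (by positivity) _ hδ.le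
      exact pow_le_pow_left₀ (by norm_num) (by exact_mod_cast hp2) a
    by_cases hpB : p ≤ B
    · simp only [hpB, if_true]
      have h2 : ((2:ℝ)^a)^δ = Real.exp ((a:ℝ) * δ * L) := by
        rw [← Real.rpow_natCast 2 a, ← Real.rpow_mul (by norm_num),
          Real.rpow_def_of_pos (by norm_num)]
        rw [hLdef]
        congr 1
        ring
      have h3 : 1 + (a:ℝ) * δ * L ≤ ((2:ℝ)^a)^δ := by
        rw [h2]
        have := Real.add_one_le_exp ((a:ℝ) * δ * L)
        linarith
      have hinv : (1 / (δ * L)) * ((a:ℝ) * δ * L) = (a:ℝ) := by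
        field_simp
      have h4 : ((a:ℝ) + 1) ≤ K * (1 + (a:ℝ) * δ * L) := by
        have hexp : K * (1 + (a:ℝ)*δ*L)
            = 1 + (a:ℝ)*δ*L + 1/(δ*L) + (1/(δ*L)) * ((a:ℝ)*δ*L) := by
          rw [hKdef]; ring
        rw [hexp, hinv]
        have h5 : 0 ≤ (a:ℝ)*δ*L := by positivity
        have h6 : 0 ≤ 1/(δ*L) := by positivity
        linarith
      have h7 : K * (1 + (a:ℝ) * δ * L) ≤ K * (((p:ℝ)^a)^δ) := by
        apply mul_le_mul_of_nonneg_left _ hK0.le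
        exact le_trans h3 hpa
      push_cast
      linarith
    · simp only [hpB, if_false, one_mul]
      have hBp : (2:ℝ)^(1/δ) ≤ (p:ℝ) := by
        have h1 : (2:ℝ)^(1/δ) ≤ (B:ℝ) := Nat.le_ceil _
        have h2 : (B:ℝ) ≤ (p:ℝ) := by
          exact_mod_cast Nat.le_of_lt (Nat.lt_of_not_le hpB)
        linarith
      have h1 : (2:ℝ)^(a:ℝ) ≤ ((p:ℝ)^a)^δ := by
        rw [← Real.rpow_natCast (p:ℝ) a, ← Real.rpow_mul hppos.le]
        have heq : (2:ℝ)^(a:ℝ) = ((2:ℝ)^(1/δ))^((a:ℕ) * δ : ℝ) := by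
          rw [← Real.rpow_mul (by norm_num)]
          congr 1
          field_simp
        rw [heq]
        apply Real.rpow_le_rpow (by positivity) hBp (by positivity)
      have h2 : ((a:ℝ) + 1) ≤ (2:ℝ)^(a:ℝ) := by
        have := (Nat.lt_two_pow_self (n := a))
        have h3 : ((a + 1 : ℕ) : ℝ) ≤ ((2^a : ℕ) : ℝ) := by exact_mod_cast this
        rw [Real.rpow_natCast]
        push_cast at h3 ⊢
        linarith
      push_cast
      linarith
  -- assemble
  have hτ : ((m.divisors.card : ℝ)) = ∏ p ∈ m.primeFactors, ((m.factorization p + 1 : ℕ) : ℝ) := by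
    rw [Nat.card_divisors hm]
    push_cast
    rfl
  have hcast : (m:ℝ) = ∏ p ∈ m.primeFactors, (p:ℝ) ^ (m.factorization p) := by
    conv_lhs => rw [← Nat.factorization_prod_pow_eq_self hm]
    rw [Nat.cast_finsuppProd, Finsupp.prod]
    exact Finset.prod_congr (m.support_factorization) (fun p _ => by push_cast; rfl)
  have hmδ : (m:ℝ) ^ δ = ∏ p ∈ m.primeFactors, ((p:ℝ) ^ (m.factorization p)) ^ δ := by
    rw [hcast, Real.finset_prod_rpow _ _ (fun p _ => by positivity) δ]
  rw [hτ]
  calc ∏ p ∈ m.primeFactors, ((m.factorization p + 1 : ℕ) : ℝ)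
      ≤ ∏ p ∈ m.primeFactors, (if p ≤ B then K else 1) * ((p:ℝ) ^ (m.factorization p)) ^ δ := by
        apply Finset.prod_le_prod (fun p _ => by positivity) key
    _ = (∏ p ∈ m.primeFactors, (if p ≤ B then K else 1)) *
          ∏ p ∈ m.primeFactors, ((p:ℝ) ^ (m.factorization p)) ^ δ := Finset.prod_mul_distrib
    _ ≤ K ^ B * (m:ℝ) ^ δ := by
        rw [← hmδ]
        apply mul_le_mul_of_nonneg_right _ (by positivity)
        have hprod : ∏ p ∈ m.primeFactors, (if p ≤ B then K else 1)
            = K ^ ((m.primeFactors.filter (· ≤ B)).card) := by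
          rw [Finset.prod_ite, Finset.prod_const, Finset.prod_const, one_pow, mul_one]
        rw [hprod]
        apply pow_le_pow_right₀ hK1
        have hsub : m.primeFactors.filter (· ≤ B) ⊆ Finset.Icc 1 B := by
          intro x hx
          simp only [Finset.mem_filter] at hx
          rw [Finset.mem_Icc]
          exact ⟨(Nat.prime_of_mem_primeFactors hx.1).one_lt.le, hx.2⟩
        have := Finset.card_le_card hsub
        simpa [Nat.card_Icc] using this

theorem stmt17 (ε : ℝ) (hε : 0 < ε) :
    ∃ C : ℝ, 0 < C ∧ ∀ ℓ n : ℤ, ℓ ^ 2 - n ≠ 0 → ∀ N : ℤ, 1 ≤ N →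
      (Set.ncard {p : ℤ × ℤ × ℤ |
        p.1 + p.2.1 - p.2.2 = ℓ ∧ p.1 ^ 2 + p.2.1 ^ 2 - p.2.2 ^ 2 = n ∧
        (max |p.2.1| |p.2.2|) ^ 10 ≤ |p.1| ∧
        ((|ℓ ^ 2 - n| : ℤ) : ℝ) ^ ε ≤ ((|ℓ - p.2.1| : ℤ) : ℝ) ∧
        |p.2.1| ≤ N ∧ |p.2.2| ≤ N} : ℝ) ≤ C * (N : ℝ) ^ ε := by
  obtain ⟨C₀, hC₀, hτ⟩ := divisor_bound_aux (ε/3) (by positivity)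
  refine ⟨2 * C₀ * 16 ^ (ε/3) + 1, by positivity, ?_⟩
  intro ℓ n hΔ N hN
  set S : Set (ℤ × ℤ × ℤ) := {p : ℤ × ℤ × ℤ |
        p.1 + p.2.1 - p.2.2 = ℓ ∧ p.1 ^ 2 + p.2.1 ^ 2 - p.2.2 ^ 2 = n ∧
        (max |p.2.1| |p.2.2|) ^ 10 ≤ |p.1| ∧
        ((|ℓ ^ 2 - n| : ℤ) : ℝ) ^ ε ≤ ((|ℓ - p.2.1| : ℤ) : ℝ) ∧
        |p.2.1| ≤ N ∧ |p.2.2| ≤ N} with hSdef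
  have hNpos : (0:ℤ) < N := lt_of_lt_of_le one_pos hN
  have hNR : (1:ℝ) ≤ (N:ℝ) := by exact_mod_cast hN
  have hNRpos : (0:ℝ) < (N:ℝ) := lt_of_lt_of_le one_pos hNR
  have hNε : (1:ℝ) ≤ (N:ℝ) ^ ε := by
    calc (1:ℝ) = 1 ^ ε := (Real.one_rpow ε).symm
      _ ≤ (N:ℝ) ^ ε := Real.rpow_le_rpow (by norm_num) hNR hε.le
  -- key identity
  have hkey : ∀ p : ℤ × ℤ × ℤ, p ∈ S →
      2 * (ℓ - p.2.1) * (p.2.1 - p.2.2) = ℓ ^ 2 - n := by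
    rintro ⟨a, b, c⟩ hp
    simp only [hSdef, Set.mem_setOf_eq] at hp
    obtain ⟨h1, h2, -, -, -, -⟩ := hp
    simp only at h1 h2 ⊢
    have ha : a = ℓ - b + c := by omega
    subst ha
    linear_combination -h2
  have hbc0 : ∀ p : ℤ × ℤ × ℤ, p ∈ S → p.2.1 - p.2.2 ≠ 0 := by
    intro p hp h0
    apply hΔ
    rw [← hkey p hp, h0, mul_zero]
  have hd0 : ∀ p : ℤ × ℤ × ℤ, p ∈ S → ℓ - p.2.1 ≠ 0 := by
    intro p hp h0
    apply hΔ
    rw [← hkey p hp, h0, mul_zero, zero_mul]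
  -- injectivity of p ↦ ℓ - b
  have hinj : Set.InjOn (fun p : ℤ × ℤ × ℤ => ℓ - p.2.1) S := by
    rintro ⟨a, b, c⟩ hp ⟨a', b', c'⟩ hq h
    simp only at h
    have hbb : b = b' := by omega
    subst hbb
    have k1 := hkey _ hp
    have k2 := hkey _ hq
    simp only at k1 k2
    have h2 : (2 * (ℓ - b)) * (b - c) = (2 * (ℓ - b)) * (b - c') := by
      linear_combination k1 - k2
    have h20 : (2 : ℤ) * (ℓ - b) ≠ 0 := by
      have := hd0 _ hp
      simp only at this
      intro h0
      apply this
      omega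
    have hcc : c = c' := by
      have := mul_left_cancel₀ h20 h2
      omega
    subst hcc
    have h1 := hkey -- dummy
    have ha1 : a + b - c = ℓ := by
      have := hp; simp only [hSdef, Set.mem_setOf_eq] at this; exact this.1
    have ha2 : a' + b - c = ℓ := by
      have := hq; simp only [hSdef, Set.mem_setOf_eq] at this; exact this.1
    have : a = a' := by omega
    simp [this]
  -- image inside an interval, finiteness
  have himg : (fun p : ℤ × ℤ × ℤ => ℓ - p.2.1) '' S ⊆ Set.Icc (ℓ - N) (ℓ + N) := by
    rintro x ⟨p, hp, rfl⟩
    have hb : |p.2.1| ≤ N := by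
      have := hp; simp only [hSdef, Set.mem_setOf_eq] at this; exact this.2.2.2.2.1
    rw [abs_le] at hb
    simp only [Set.mem_Icc]
    omega
  have hcard : (S.ncard : ℝ) = (((fun p : ℤ × ℤ × ℤ => ℓ - p.2.1) '' S).ncard : ℝ) := by
    rw [Set.ncard_image_of_injOn hinj]
  by_cases hD : |ℓ ^ 2 - n| ≤ 16 * N ^ 3
  · -- small discriminant: divisor bound
    set D : ℕ := (ℓ ^ 2 - n).natAbs with hDdef
    have hD0 : D ≠ 0 := Int.natAbs_ne_zero.mpr hΔ
    set F : Finset ℤ := D.divisors.image (fun k : ℕ => (k : ℤ)) ∪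
        D.divisors.image (fun k : ℕ => -(k : ℤ)) with hF
    have himgF : (fun p : ℤ × ℤ × ℤ => ℓ - p.2.1) '' S ⊆ ↑F := by
      rintro x ⟨p, hp, rfl⟩
      have hk := hkey p hp
      have hdvd : (ℓ - p.2.1) ∣ (ℓ ^ 2 - n) :=
        ⟨2 * (p.2.1 - p.2.2), by linear_combination -hk⟩
      have hnat : (ℓ - p.2.1).natAbs ∣ D := Int.natAbs_dvd_natAbs.mpr hdvd
      have hmemdiv : (ℓ - p.2.1).natAbs ∈ D.divisors := Nat.mem_divisors.mpr ⟨hnat, hD0⟩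
      rcases Int.natAbs_eq (ℓ - p.2.1) with h | h
      · exact Finset.mem_coe.mpr (Finset.mem_union_left _
          (Finset.mem_image.mpr ⟨_, hmemdiv, h.symm⟩))
      · exact Finset.mem_coe.mpr (Finset.mem_union_right _
          (Finset.mem_image.mpr ⟨_, hmemdiv, h.symm⟩))
    have hle1 : (S.ncard : ℝ) ≤ (F.card : ℝ) := by
      rw [hcard]
      have h1 : ((fun p : ℤ × ℤ × ℤ => ℓ - p.2.1) '' S).ncard ≤ (↑F : Set ℤ).ncard :=
        Set.ncard_le_ncard himgF F.finite_toSet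
      rw [Set.ncard_coe_finset] at h1
      exact_mod_cast h1
    have hle2 : (F.card : ℝ) ≤ 2 * (D.divisors.card : ℝ) := by
      have h1 := Finset.card_union_le (D.divisors.image (fun k : ℕ => (k : ℤ)))
        (D.divisors.image (fun k : ℕ => -(k : ℤ)))
      have h2 := Finset.card_image_le (s := D.divisors) (f := fun k : ℕ => (k : ℤ))
      have h3 := Finset.card_image_le (s := D.divisors) (f := fun k : ℕ => -(k : ℤ))
      have : F.card ≤ 2 * D.divisors.card := by
        rw [hF]; omega
      exact_mod_cast this
    have hτD := hτ D hD0
    have hDle : (D : ℝ) ≤ 16 * (N : ℝ) ^ 3 := by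
      have h1 : (D : ℤ) ≤ 16 * N ^ 3 := by
        rw [hDdef, ← Int.abs_eq_natAbs]; exact hD
      exact_mod_cast h1
    have hstep : (D : ℝ) ^ (ε/3) ≤ (16 * (N:ℝ) ^ 3) ^ (ε/3) :=
      Real.rpow_le_rpow (Nat.cast_nonneg D) hDle (by positivity)
    have hexp : (16 * (N:ℝ) ^ 3) ^ (ε/3) = 16 ^ (ε/3) * (N:ℝ) ^ ε := by
      rw [Real.mul_rpow (by norm_num) (by positivity),
        ← Real.rpow_natCast (N:ℝ) 3, ← Real.rpow_mul hNRpos.le]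
      norm_num
      left
      congr 1
      ring
    have hfinal : (S.ncard : ℝ) ≤ 2 * C₀ * 16 ^ (ε/3) * (N:ℝ) ^ ε := by
      calc (S.ncard : ℝ) ≤ (F.card : ℝ) := hle1
        _ ≤ 2 * (D.divisors.card : ℝ) := hle2
        _ ≤ 2 * (C₀ * (D : ℝ) ^ (ε/3)) := by linarith
        _ ≤ 2 * (C₀ * (16 ^ (ε/3) * (N:ℝ) ^ ε)) := by
            have := hstep.trans_eq hexp
            have h4 : C₀ * (D : ℝ) ^ (ε/3) ≤ C₀ * (16 ^ (ε/3) * (N:ℝ) ^ ε) :=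
              mul_le_mul_of_nonneg_left this hC₀.le
            linarith
        _ = 2 * C₀ * 16 ^ (ε/3) * (N:ℝ) ^ ε := by ring
    have hNεpos : (0:ℝ) < (N:ℝ) ^ ε := lt_of_lt_of_le one_pos hNε
    nlinarith [hNεpos]
  · -- large discriminant: at most one solution
    push_neg at hD
    have hsub : S.Subsingleton := by
      rintro ⟨a, b, c⟩ hp ⟨a', b', c'⟩ hq
      have k1 := hkey _ hp
      have k2 := hkey _ hq
      simp only at k1 k2
      have hpmem := hp; simp only [hSdef, Set.mem_setOf_eq] at hpmem
      have hqmem := hq; simp only [hSdef, Set.mem_setOf_eq] at hqmem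
      obtain ⟨h1, -, -, -, hb1, hc1⟩ := hpmem
      obtain ⟨h1', -, -, -, hb2, hc2⟩ := hqmem
      have he : b - c = b' - c' := by
        by_contra hne
        set A : ℤ := |ℓ ^ 2 - n| with hA
        have hA0 : 0 < A := abs_pos.mpr hΔ
        have f1 : A = 2 * |ℓ - b| * |b - c| := by
          rw [hA, ← k1, abs_mul, abs_mul]
          simp
        have f2 : A = 2 * |ℓ - b'| * |b' - c'| := by
          rw [hA, ← k2, abs_mul, abs_mul]
          simp
        have hident : (ℓ ^ 2 - n) * ((ℓ - b') - (ℓ - b)) =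
            2 * (ℓ - b) * (ℓ - b') * ((b - c) - (b' - c')) := by
          linear_combination (ℓ - b) * k2 - (ℓ - b') * k1
        have f3 : A * |(ℓ - b') - (ℓ - b)| =
            2 * |ℓ - b| * |ℓ - b'| * |(b - c) - (b' - c')| := by
          rw [hA, ← abs_mul, hident, abs_mul, abs_mul, abs_mul]
          simp
        have f4 : |b - c| ≤ 2 * N := le_trans (abs_sub b c) (by omega)
        have f5 : |b' - c'| ≤ 2 * N := le_trans (abs_sub b' c') (by omega)
        have f6 : |(ℓ - b') - (ℓ - b)| ≤ 2 * N := by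
          have : (ℓ - b') - (ℓ - b) = b - b' := by ring
          rw [this]
          exact le_trans (abs_sub b b') (by omega)
        have f7 : 1 ≤ |(b - c) - (b' - c')| := Int.one_le_abs (sub_ne_zero.mpr hne)
        have g3 : 2 * |ℓ - b| * |ℓ - b'| ≤ A * |(ℓ - b') - (ℓ - b)| := by
          calc 2 * |ℓ - b| * |ℓ - b'|
              = 2 * |ℓ - b| * |ℓ - b'| * 1 := by ring
            _ ≤ 2 * |ℓ - b| * |ℓ - b'| * |(b - c) - (b' - c')| := by
                apply mul_le_mul_of_nonneg_left f7 (by positivity)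
            _ = A * |(ℓ - b') - (ℓ - b)| := f3.symm
        have g4 : A * |(ℓ - b') - (ℓ - b)| ≤ A * (2 * N) :=
          mul_le_mul_of_nonneg_left f6 hA0.le
        have g5 : 2 * |ℓ - b| * |ℓ - b'| ≤ 2 * N * A := by
          calc 2 * |ℓ - b| * |ℓ - b'| ≤ A * (2 * N) := g3.trans g4
            _ = 2 * N * A := by ring
        have hAA : A * A = (2 * |ℓ - b| * |ℓ - b'|) * (2 * (|b - c| * |b' - c'|)) := by
          nth_rewrite 1 [f1]
          nth_rewrite 1 [f2]
          ring
        have hvv : |b - c| * |b' - c'| ≤ (2 * N) * (2 * N) :=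
          mul_le_mul f4 f5 (abs_nonneg _) (by positivity)
        have hlast : A * A ≤ 16 * N ^ 3 * A := by
          calc A * A = (2 * |ℓ - b| * |ℓ - b'|) * (2 * (|b - c| * |b' - c'|)) := hAA
            _ ≤ (2 * N * A) * (2 * ((2 * N) * (2 * N))) := by
                apply mul_le_mul g5 (by linarith) (by positivity) (by positivity)
            _ = 16 * N ^ 3 * A := by ring
        have : A ≤ 16 * N ^ 3 := le_of_mul_le_mul_right (by linarith) hA0
        omega
      have hbb : b = b' := by
        have h2 : (2 * (b - c)) * (ℓ - b) = (2 * (b - c)) * (ℓ - b') := by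
          have e1 : (2 * (b - c)) * (ℓ - b) = 2 * (ℓ - b) * (b - c) := by ring
          have e2 : (2 * (b - c)) * (ℓ - b') = 2 * (ℓ - b') * (b' - c') := by
            rw [he]; ring
          rw [e1, e2, k1, k2]
        have h20 : (2 : ℤ) * (b - c) ≠ 0 := by
          have := hbc0 _ hp
          simp only at this
          intro h0; apply this; omega
        have := mul_left_cancel₀ h20 h2
        omega
      have hcc : c = c' := by omega
      have haa : a = a' := by omega
      simp [haa, hbb, hcc]
    have hone : S.ncard ≤ 1 := by
      rcases S.eq_empty_or_nonempty with h | ⟨x, hx⟩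
      · simp [h]
      · have hsubx : S ⊆ {x} := fun y hy => by
          rw [Set.mem_singleton_iff]; exact hsub hy hx
        calc S.ncard ≤ ({x} : Set (ℤ × ℤ × ℤ)).ncard :=
              Set.ncard_le_ncard hsubx (Set.finite_singleton x)
          _ = 1 := Set.ncard_singleton x
    have h1R : (S.ncard : ℝ) ≤ 1 := by exact_mod_cast hone
    calc (S.ncard : ℝ) ≤ 1 := h1R
      _ ≤ 1 * (N:ℝ) ^ ε := by rw [one_mul]; exact hNε
      _ ≤ (2 * C₀ * 16 ^ (ε/3) + 1) * (N:ℝ) ^ ε := by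
          apply mul_le_mul_of_nonneg_right _ (by positivity)
          nlinarith [Real.rpow_pos_of_pos (show (0:ℝ) < 16 by norm_num) (ε/3)]
end
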